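/- arXiv:1610.06988 — 8 statements merged into one kernel-verified Lean document; each statement's English description precedes it below -/
import Mathlib

section
/- Let g > 0. For every integer k ≥ 1 and every ε > 0 there exist a real number β with β_k − ε < β < β_k and a GP solution φ on [0,L] with parameter β such that φ is not identically zero on [0,L] and sup_{x ∈ [0,L]} |φ(x)| < ε; moreover −φ is also a GP solution on [0,L] with parameter β, so there are at least two distinct nonzero GP solutions for this β. (Local bifurcation of new quantum states from (0, β_k) to the left of β_k in the repulsive case.) -/
open Set MeasureTheory intervalIntegral Filter Topology

/-- `φ` is a GP solution on `[a,b]` with parameter `β`: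
`φ` is continuous on `[a,b]`, twice continuously differentiable on `(a,b)`,
satisfies `-(ℏ²/(4m))·φ'' + (β - ℏλ)·φ + g·φ³ = 0` on `(a,b)`,
and `φ a = φ b = 0`. -/
def IsGPSolution (ℏ m lam g a b β : ℝ) (φ : ℝ → ℝ) : Prop :=
  ContinuousOn φ (Set.Icc a b) ∧
  ContDiffOn ℝ 2 φ (Set.Ioo a b) ∧
  (∀ x ∈ Set.Ioo a b,
    -(ℏ ^ 2 / (4 * m)) * deriv (deriv φ) x + (β - ℏ * lam) * φ x + g * (φ x) ^ 3 = 0) ∧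
  φ a = 0 ∧ φ b = 0

/-- The quantum critical points `β_k = ℏλ - (ℏ²/(4m))·(kπ/L)²`. -/
noncomputable def betaCrit (ℏ m lam L : ℝ) (k : ℕ) : ℝ :=
  ℏ * lam - (ℏ ^ 2 / (4 * m)) * ((k : ℝ) * Real.pi / L) ^ 2

lemma gp_aux (p d q : ℝ) (hd : 0 < d) (hdp : 2 * d < p) (hq : 0 < q) :
    ∃ φ : ℝ → ℝ, ∃ Θ : ℝ → ℝ,
      ContDiff ℝ 2 φ ∧
      (∀ x, deriv (deriv φ) x = -p * φ x + q * φ x ^ 3) ∧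
      StrictMono Θ ∧
      (∀ t : ℝ, Θ t = ∫ ψ in (0:ℝ)..t, (Real.sqrt (p - d * (1 + Real.sin ψ ^ 2)))⁻¹) ∧
      (∀ t, φ (Θ t) = Real.sqrt (2 * d / q) * Real.sin t) ∧
      (∀ x, |φ x| ≤ Real.sqrt (2 * d / q)) := by
  have hp : 0 < p := lt_trans (by linarith) hdp
  set A : ℝ := Real.sqrt (2 * d / q) with hA_def
  have hA_pos : 0 < A := Real.sqrt_pos.2 (by positivity)
  have hA_sq : q * A ^ 2 = 2 * d := by
    rw [hA_def, Real.sq_sqrt (by positivity)]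
    field_simp
  set E : ℝ → ℝ := fun ψ => p - d * (1 + Real.sin ψ ^ 2) with hE_def
  have hE_lb : ∀ ψ, p - 2 * d ≤ E ψ := by
    intro ψ
    have h1 : Real.sin ψ ^ 2 ≤ 1 := Real.sin_sq_le_one ψ
    simp only [hE_def]; nlinarith
  have hE_pos : ∀ ψ, 0 < E ψ := fun ψ => lt_of_lt_of_le (by linarith) (hE_lb ψ)
  set W : ℝ → ℝ := fun ψ => Real.sqrt (E ψ) with hW_def
  have hW_pos : ∀ ψ, 0 < W ψ := fun ψ => Real.sqrt_pos.2 (hE_pos ψ)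
  have hE_cont : Continuous E := by fun_prop
  have hW_cont : Continuous W := hE_cont.sqrt
  set v : ℝ → ℝ := fun ψ => (W ψ)⁻¹ with hv_def
  have hv_pos : ∀ ψ, 0 < v ψ := fun ψ => inv_pos.2 (hW_pos ψ)
  have hv_cont : Continuous v := hW_cont.inv₀ fun ψ => (hW_pos ψ).ne'
  set Θ : ℝ → ℝ := fun t => ∫ ψ in (0:ℝ)..t, v ψ with hΘ_def
  have hΘd : ∀ t, HasDerivAt Θ (v t) t := fun t =>
    intervalIntegral.integral_hasDerivAt_right
      (hv_cont.intervalIntegrable _ _)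
      hv_cont.stronglyMeasurable.stronglyMeasurableAtFilter
      hv_cont.continuousAt
  have hΘmono : StrictMono Θ := by
    apply strictMono_of_deriv_pos
    intro t
    rw [(hΘd t).deriv]
    exact hv_pos t
  have hΘdiff : Differentiable ℝ Θ := fun t => (hΘd t).differentiableAt
  have hΘcont : Continuous Θ := hΘdiff.continuous
  -- lower bound for v
  set v₁ : ℝ := (Real.sqrt p)⁻¹ with hv₁_def
  have hv₁_pos : 0 < v₁ := inv_pos.2 (Real.sqrt_pos.2 hp)
  have hE_ub : ∀ ψ, E ψ ≤ p := by
    intro ψ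
    have h1 : 0 ≤ Real.sin ψ ^ 2 := sq_nonneg _
    simp only [hE_def]; nlinarith
  have hv_lb : ∀ ψ, v₁ ≤ v ψ := by
    intro ψ
    exact inv_anti₀ (hW_pos ψ) (Real.sqrt_le_sqrt (hE_ub ψ))
  have hΘ_lb : ∀ t, 0 ≤ t → v₁ * t ≤ Θ t := by
    intro t ht
    have h := intervalIntegral.integral_mono_on (μ := volume) ht
      (_root_.intervalIntegrable_const (c := v₁)) (hv_cont.intervalIntegrable _ _)
      (fun ψ _ => hv_lb ψ)
    rw [intervalIntegral.integral_const] at h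
    simpa [mul_comm] using h
  have hΘ_ub : ∀ t, t ≤ 0 → Θ t ≤ v₁ * t := by
    intro t ht
    have h := intervalIntegral.integral_mono_on (μ := volume) ht
      (_root_.intervalIntegrable_const (c := v₁)) (hv_cont.intervalIntegrable _ _)
      (fun ψ _ => hv_lb ψ)
    rw [intervalIntegral.integral_const] at h
    have h2 : Θ t = -∫ ψ in t..(0:ℝ), v ψ := by
      rw [hΘ_def]; exact (intervalIntegral.integral_symm _ _)
    rw [h2]
    have : v₁ * (0 - t) ≤ ∫ ψ in t..(0:ℝ), v ψ := by simpa [mul_comm] using h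
    linarith
  have htop : Tendsto Θ atTop atTop := by
    apply tendsto_atTop_mono' atTop ?_ (tendsto_id.const_mul_atTop hv₁_pos)
    filter_upwards [eventually_ge_atTop (0:ℝ)] with t ht
    exact hΘ_lb t ht
  have hbot : Tendsto Θ atBot atBot := by
    apply tendsto_atBot_mono' atBot ?_ (tendsto_id.const_mul_atBot hv₁_pos)
    filter_upwards [eventually_le_atBot (0:ℝ)] with t ht
    exact hΘ_ub t ht
  have hsurj : Function.Surjective Θ := hΘcont.surjective htop hbot
  set e := StrictMono.orderIsoOfSurjective Θ hΘmono hsurj with he_def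
  set T : ℝ → ℝ := fun y => e.symm y with hT_def
  have hTΘ : ∀ t, T (Θ t) = t := fun t =>
    StrictMono.orderIsoOfSurjective_symm_apply_self Θ hΘmono hsurj t
  have hΘT : ∀ y, Θ (T y) = y := fun y =>
    StrictMono.orderIsoOfSurjective_self_symm_apply Θ hΘmono hsurj y
  have hTcont : Continuous T := (OrderIso.continuous e.symm)
  have hTd : ∀ x, HasDerivAt T (W (T x)) x := by
    intro x
    have h := HasDerivAt.of_local_left_inverse hTcont.continuousAt
      (hΘd (T x)) (hv_pos (T x)).ne' (Filter.Eventually.of_forall hΘT)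
    simpa [hv_def] using h
  -- derivative of W
  have hE' : ∀ ψ, HasDerivAt E (-(2 * d * (Real.sin ψ * Real.cos ψ))) ψ := by
    intro ψ
    have hs : HasDerivAt (fun z => Real.sin z ^ 2) (2 * Real.sin ψ * Real.cos ψ) ψ := by
      simpa using (Real.hasDerivAt_sin ψ).fun_pow 2
    have h := ((hs.const_add 1).const_mul d).const_sub p
    refine h.congr_deriv ?_
    ring
  have hW' : ∀ ψ, HasDerivAt W (-(2 * d * (Real.sin ψ * Real.cos ψ)) / (2 * W ψ)) ψ :=
    fun ψ => (hE' ψ).sqrt (hE_pos ψ).ne'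
  set φ : ℝ → ℝ := fun x => A * Real.sin (T x) with hφ_def
  set φ₁ : ℝ → ℝ := fun x => A * (Real.cos (T x) * W (T x)) with hφ₁_def
  have hφd : ∀ x, HasDerivAt φ (φ₁ x) x := fun x =>
    ((Real.hasDerivAt_sin (T x)).comp x (hTd x)).const_mul A
  have hφ1d : ∀ x, HasDerivAt φ₁ (-p * φ x + q * φ x ^ 3) x := by
    intro x
    have hcos : HasDerivAt (fun y => Real.cos (T y)) (-Real.sin (T x) * W (T x)) x :=
      (Real.hasDerivAt_cos (T x)).comp x (hTd x)
    have hWT : HasDerivAt (fun y => W (T y))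
        ((-(2 * d * (Real.sin (T x) * Real.cos (T x))) / (2 * W (T x))) * W (T x)) x :=
      (hW' (T x)).comp x (hTd x)
    have h := (hcos.mul hWT).const_mul A
    refine h.congr_deriv ?_
    symm
    have hW2 : W (T x) * W (T x) = E (T x) := Real.mul_self_sqrt (hE_pos (T x)).le
    have hWne : W (T x) ≠ 0 := (hW_pos (T x)).ne'
    have hsc : Real.sin (T x) ^ 2 + Real.cos (T x) ^ 2 = 1 := Real.sin_sq_add_cos_sq (T x)
    have hEv : E (T x) = p - d * (1 + Real.sin (T x) ^ 2) := rfl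
    have hφv : φ x = A * Real.sin (T x) := rfl
    have hW2' : W (T x) * W (T x) = p - d * (1 + Real.sin (T x) ^ 2) := hW2.trans hEv
    rw [hφv]
    have hdiv : -(2 * d * (Real.sin (T x) * Real.cos (T x))) / (2 * W (T x)) * W (T x)
        = -(d * (Real.sin (T x) * Real.cos (T x))) := by
      rw [div_mul_eq_mul_div, div_eq_iff (mul_ne_zero two_ne_zero hWne)]; ring
    rw [hdiv]
    linear_combination (A*Real.sin (T x)) * hW2'
      + (A*d*Real.sin (T x)) * hsc
      + (A*Real.sin (T x)^3) * hA_sq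
  have hderiv1 : deriv φ = φ₁ := funext fun x => (hφd x).deriv
  have hderiv2 : ∀ x, deriv φ₁ x = -p * φ x + q * φ x ^ 3 := fun x => (hφ1d x).deriv
  have hφdiff : Differentiable ℝ φ := fun x => (hφd x).differentiableAt
  have hφ1diff : Differentiable ℝ φ₁ := fun x => (hφ1d x).differentiableAt
  have hφcont : Continuous φ := hφdiff.continuous
  have hφ2cont : Continuous fun x => -p * φ x + q * φ x ^ 3 := by fun_prop
  have hC1 : ContDiff ℝ 1 φ₁ := contDiff_one_iff_deriv.2
    ⟨hφ1diff, by rw [funext hderiv2]; exact hφ2cont⟩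
  have hC2 : ContDiff ℝ 2 φ := by
    rw [show (2 : WithTop ℕ∞) = 1 + 1 by norm_num, contDiff_succ_iff_deriv]
    exact ⟨hφdiff, by simp, by rw [hderiv1]; exact hC1⟩
  refine ⟨φ, Θ, hC2, ?_, hΘmono, fun t => rfl, ?_, ?_⟩
  · intro x
    rw [hderiv1, hderiv2]
  · intro t
    simp only [hφ_def]
    rw [hTΘ t]
  · intro x
    have h1 : |Real.sin (T x)| ≤ 1 :=
      abs_le.2 ⟨Real.neg_one_le_sin _, Real.sin_le_one _⟩
    calc |φ x| = A * |Real.sin (T x)| := by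
          rw [hφ_def]; rw [abs_mul, abs_of_pos hA_pos]
      _ ≤ A * 1 := by gcongr
      _ = A := mul_one A

set_option maxHeartbeats 1600000 in
/-- for `g > 0`, local bifurcation of new quantum states from `(0, β_k)`
to the left of `β_k` in the repulsive case. -/
theorem stmt_0 (ℏ m lam L g : ℝ) (hℏ : 0 < ℏ) (hm : 0 < m) (hL : 0 < L)
    (hg : 0 < g) (k : ℕ) (hk : 1 ≤ k) (ε : ℝ) (hε : 0 < ε) :
    ∃ β : ℝ, ∃ φ : ℝ → ℝ,
      betaCrit ℏ m lam L k - ε < β ∧ β < betaCrit ℏ m lam L k ∧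
      IsGPSolution ℏ m lam g 0 L β φ ∧
      (∃ x ∈ Set.Icc (0:ℝ) L, φ x ≠ 0) ∧
      (∀ x ∈ Set.Icc (0:ℝ) L, |φ x| < ε) ∧
      IsGPSolution ℏ m lam g 0 L β (fun x => -φ x) ∧
      (∃ x ∈ Set.Icc (0:ℝ) L, φ x ≠ -φ x) := by
  have hπ := Real.pi_pos
  have hk' : (1:ℝ) ≤ (k:ℝ) := by exact_mod_cast hk
  have hk0 : (0:ℝ) < (k:ℝ) := by linarith
  set c : ℝ := ℏ^2/(4*m) with hc_def
  have hc : 0 < c := by positivity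
  set q : ℝ := g / c with hq_def
  have hq : 0 < q := by positivity
  set pk : ℝ := ((k:ℝ)*Real.pi/L)^2 with hpk_def
  have hpk : 0 < pk := pow_pos (div_pos (mul_pos hk0 hπ) hL) 2
  set r : ℝ := min (1/4) (min (ε/(8*c*pk)) (q*ε^2/(8*pk))) with hr_def
  have hr0 : 0 < r := lt_min (by norm_num) (lt_min (by positivity) (by positivity))
  have hr4 : r ≤ 1/4 := min_le_left _ _
  have hrε : r ≤ ε/(8*c*pk) := le_trans (min_le_right _ _) (min_le_left _ _)
  have hrA : r ≤ q*ε^2/(8*pk) := le_trans (min_le_right _ _) (min_le_right _ _)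
  set u : ℝ → ℝ := fun ψ => 1 - r*(1+Real.sin ψ^2) with hu_def
  have hu_lb : ∀ ψ, 1 - 2*r ≤ u ψ := by
    intro ψ
    have := Real.sin_sq_le_one ψ
    simp only [hu_def]; nlinarith
  have hu_ub : ∀ ψ, u ψ ≤ 1 - r := by
    intro ψ
    have := sq_nonneg (Real.sin ψ)
    simp only [hu_def]; nlinarith
  have h2r : (1:ℝ)/2 ≤ 1 - 2*r := by linarith
  have hu_pos : ∀ ψ, 0 < u ψ := fun ψ => lt_of_lt_of_le (by linarith) (hu_lb ψ)
  have hkπ : 0 < (k:ℝ)*Real.pi := mul_pos hk0 hπ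
  set J : ℝ := ∫ ψ in (0:ℝ)..((k:ℝ)*Real.pi), (Real.sqrt (u ψ))⁻¹ with hJ_def
  have hu_cont : Continuous u := by fun_prop
  have hint_cont : Continuous (fun ψ => (Real.sqrt (u ψ))⁻¹) :=
    (hu_cont.sqrt).inv₀ fun ψ => (Real.sqrt_pos.2 (hu_pos ψ)).ne'
  have hs1 : (1:ℝ) < (Real.sqrt (1-r))⁻¹ := by
    have h2 : 0 < Real.sqrt (1-r) := Real.sqrt_pos.2 (by linarith)
    have h1 : Real.sqrt (1-r) < 1 := (Real.sqrt_lt' one_pos).2 (by nlinarith)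
    exact (one_lt_inv₀ h2).mpr h1
  have hJ_lb : (k:ℝ)*Real.pi * (Real.sqrt (1-r))⁻¹ ≤ J := by
    have h := intervalIntegral.integral_mono_on (μ := volume) hkπ.le
      (_root_.intervalIntegrable_const (c := (Real.sqrt (1-r))⁻¹))
      (hint_cont.intervalIntegrable _ _)
      (fun ψ _ => by
        refine inv_anti₀ (Real.sqrt_pos.2 (hu_pos ψ)) (Real.sqrt_le_sqrt (hu_ub ψ)))
    rw [intervalIntegral.integral_const] at h
    rw [hJ_def]
    simp only [smul_eq_mul, sub_zero] at h
    exact h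
  have hJ_ub : J ≤ (k:ℝ)*Real.pi * (Real.sqrt (1-2*r))⁻¹ := by
    have h := intervalIntegral.integral_mono_on (μ := volume) hkπ.le
      (hint_cont.intervalIntegrable _ _)
      (_root_.intervalIntegrable_const (c := (Real.sqrt (1-2*r))⁻¹))
      (fun ψ _ => by
        refine inv_anti₀ (Real.sqrt_pos.2 (by linarith)) (Real.sqrt_le_sqrt (hu_lb ψ)))
    rw [intervalIntegral.integral_const] at h
    rw [hJ_def]
    simp only [smul_eq_mul, sub_zero] at h
    exact h
  have hJ_gt : (k:ℝ)*Real.pi < J :=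
    lt_of_lt_of_le (by simpa using mul_lt_mul_of_pos_left hs1 hkπ) hJ_lb
  have hJ_pos : 0 < J := lt_trans hkπ hJ_gt
  set p : ℝ := (J/L)^2 with hp_def
  have hp_pos : 0 < p := pow_pos (div_pos hJ_pos hL) 2
  set d : ℝ := r * p with hd_def
  have hd : 0 < d := mul_pos hr0 hp_pos
  have hdp : 2*d < p := by
    rw [hd_def]; nlinarith
  clear_value c q pk r J p d
  have hpk_lt : pk < p := by
    rw [hp_def, hpk_def]
    have h1 : (k:ℝ)*Real.pi/L < J/L := by gcongr
    exact pow_lt_pow_left₀ h1 (by positivity) (by norm_num)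
  -- upper bound for p
  have hL2 : (0:ℝ) < L^2 := by positivity
  have hp_ub : p*(1-2*r) ≤ pk := by
    have hs : (Real.sqrt (1-2*r))^2 = 1-2*r := Real.sq_sqrt (by linarith)
    have hinv : (1-2*r) * (1-2*r)⁻¹ = 1 := mul_inv_cancel₀ (by linarith)
    have hkey : J^2 * (1-2*r) ≤ ((k:ℝ)*Real.pi)^2 := by
      have h1 : J^2 ≤ ((k:ℝ)*Real.pi * (Real.sqrt (1-2*r))⁻¹)^2 :=
        pow_le_pow_left₀ hJ_pos.le hJ_ub 2
      have h2 : ((k:ℝ)*Real.pi * (Real.sqrt (1-2*r))⁻¹)^2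
          = ((k:ℝ)*Real.pi)^2 * (1-2*r)⁻¹ := by
        rw [mul_pow, inv_pow, hs]
      rw [h2] at h1
      have h3 := mul_le_mul_of_nonneg_right h1 (by linarith : (0:ℝ) ≤ 1-2*r)
      calc J^2 * (1-2*r) ≤ ((k:ℝ)*Real.pi)^2 * (1-2*r)⁻¹ * (1-2*r) := h3
        _ = ((k:ℝ)*Real.pi)^2 := by
            rw [mul_assoc, inv_mul_cancel₀ (by linarith : (1:ℝ)-2*r ≠ 0), mul_one]
    calc p*(1-2*r) = J^2*(1-2*r)/L^2 := by rw [hp_def]; ring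
      _ ≤ ((k:ℝ)*Real.pi)^2/L^2 := by
          exact (div_le_div_iff_of_pos_right hL2).2 hkey
      _ = pk := by rw [hpk_def]; ring
  have hp2 : p ≤ 2*pk := by
    have := mul_le_mul_of_nonneg_left h2r hp_pos.le
    linarith
  have hdiff : p - pk ≤ 4*pk*r := by
    have h5 := mul_le_mul_of_nonneg_left hp2 hr0.le
    linarith
  -- invoke the construction
  obtain ⟨φ, Θ, hφC2, hφ'', hΘmono, hΘeq, hφΘ, hφbd⟩ := gp_aux p d q hd hdp hq
  set A : ℝ := Real.sqrt (2*d/q) with hA_def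
  have hA_pos : 0 < A := Real.sqrt_pos.2 (by positivity)
  have hA_lt : A < ε := by
    rw [hA_def, Real.sqrt_lt' hε, div_lt_iff₀ hq]
    -- 2*d = 2*r*p ≤ 2*r*(2*pk) ≤ 4*pk*(q*ε²/(8*pk)) = q*ε²/2 < ε²*q
    have h1 : 2*d ≤ 4*(r*pk) := by
      have := mul_le_mul_of_nonneg_left hp2 hr0.le
      rw [hd_def]; linarith
    have h2 : r*pk ≤ q*ε^2/8 := by
      have h3 := mul_le_mul_of_nonneg_right hrA hpk.le
      rw [div_mul_eq_mul_div, mul_comm (q*ε^2) pk, mul_div_assoc] at h3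
      have h4 : pk * (q*ε^2/(8*pk)) = q*ε^2/8 := by
        field_simp
      calc r*pk ≤ (q*ε^2/(8*pk))*pk := mul_le_mul_of_nonneg_right hrA hpk.le
        _ = q*ε^2/8 := by rw [mul_comm]; exact h4
    have hqe : 0 < q*ε^2 := by positivity
    linarith
  -- Θ at the endpoints
  have hEu : ∀ ψ, p - d*(1+Real.sin ψ^2) = p * u ψ := by
    intro ψ
    simp only [hu_def, hd_def]
    ring
  have hΘk : Θ ((k:ℝ)*Real.pi) = L := by
    rw [hΘeq]
    have hrw : ∀ ψ : ℝ, (Real.sqrt (p - d*(1+Real.sin ψ^2)))⁻¹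
        = (Real.sqrt p)⁻¹ * (Real.sqrt (u ψ))⁻¹ := by
      intro ψ
      rw [hEu ψ, Real.sqrt_mul hp_pos.le, mul_inv]
    simp_rw [hrw]
    rw [intervalIntegral.integral_const_mul, ← hJ_def]
    have hsp : Real.sqrt p = J / L := by
      rw [hp_def, Real.sqrt_sq (by positivity)]
    rw [hsp]
    field_simp
  have hΘ0 : Θ 0 = 0 := by
    rw [hΘeq]
    simp
  have hφ0 : φ 0 = 0 := by
    have h := hφΘ 0
    rw [hΘ0] at h
    simpa using h
  have hφL : φ L = 0 := by
    have h := hφΘ ((k:ℝ)*Real.pi)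
    rw [hΘk, Real.sin_nat_mul_pi] at h
    simpa using h
  set β : ℝ := ℏ*lam - c*p with hβ_def
  have hbc : betaCrit ℏ m lam L k = ℏ*lam - c*pk := by
    rw [betaCrit, ← hc_def, ← hpk_def]
  -- the ODE in GP form
  have hODE : ∀ ψ : ℝ → ℝ, (∀ x, deriv (deriv ψ) x = -p * ψ x + q * ψ x ^ 3) →
      ∀ x ∈ Set.Ioo (0:ℝ) L,
      -(ℏ ^ 2 / (4 * m)) * deriv (deriv ψ) x + (β - ℏ * lam) * ψ x + g * (ψ x) ^ 3 = 0 := by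
    intro ψ hψ x _
    rw [hψ x, ← hc_def, hβ_def]
    have hgq : g = c * q := by
      rw [hq_def]
      field_simp
    rw [hgq]
    ring
  -- witness point
  set x₀ : ℝ := Θ (Real.pi/2) with hx₀_def
  have hx₀_mem : x₀ ∈ Set.Icc (0:ℝ) L := by
    constructor
    · rw [← hΘ0]
      exact hΘmono.monotone (by linarith)
    · rw [← hΘk]
      refine hΘmono.monotone ?_
      have := mul_le_mul_of_nonneg_right hk' hπ.le
      linarith
  have hφx₀ : φ x₀ = A := by
    have h := hφΘ (Real.pi/2)
    rw [Real.sin_pi_div_two] at h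
    rw [hx₀_def, h, mul_one]
  -- negated second derivative
  have hφneg'' : ∀ x, deriv (deriv (fun y => -φ y)) x
      = -p * (-φ x) + q * (-φ x) ^ 3 := by
    intro x
    have h1 : deriv (fun y => -φ y) = fun y => -deriv φ y := funext fun y => deriv.neg
    rw [h1]
    have h2 : deriv (fun y => -deriv φ y) x = -(deriv (deriv φ) x) := deriv.neg
    rw [h2, hφ'' x]
    ring
  refine ⟨β, φ, ?_, ?_, ?_, ?_, ?_, ?_, ?_⟩
  · -- betaCrit - ε < β
    rw [hbc, hβ_def]
    have h6 : 0 < 8*c*pk := by positivity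
    have h5 : r*(8*c*pk) ≤ ε := (le_div_iff₀ h6).mp hrε
    have h7 := mul_le_mul_of_nonneg_left hdiff hc.le
    linarith
  · -- β < betaCrit
    rw [hbc, hβ_def]
    have := mul_lt_mul_of_pos_left hpk_lt hc
    linarith
  · exact ⟨hφC2.continuous.continuousOn, hφC2.contDiffOn,
      hODE φ hφ'', hφ0, hφL⟩
  · exact ⟨x₀, hx₀_mem, by rw [hφx₀]; exact hA_pos.ne'⟩
  · intro x _
    exact lt_of_le_of_lt (hφbd x) hA_lt
  · refine ⟨hφC2.continuous.neg.continuousOn, (hφC2.neg).contDiffOn,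
      ?_, by simp [hφ0], by simp [hφL]⟩
    intro x hx
    rw [hφneg'' x, ← hc_def, hβ_def]
    have hgq : g = c * q := by
      rw [hq_def]
      field_simp
    rw [hgq]
    ring
  · refine ⟨x₀, hx₀_mem, ?_⟩
    rw [hφx₀]
    intro h
    linarith
end

section
/- Let g < 0. For every integer k ≥ 1 and every ε > 0 there exist a real number β with β_k < β < β_k + ε and a GP solution φ on [0,L] with parameter β such that φ is not identically zero on [0,L] and sup_{x ∈ [0,L]} |φ(x)| < ε; moreover −φ is also a GP solution on [0,L] with parameter β, so there are at least two distinct nonzero GP solutions for this β. (Local bifurcation of new quantum states from (0, β_k) to the right of β_k in the attractive case.) -/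
open Set MeasureTheory intervalIntegral Filter Topology

noncomputable def gpH (μ ρ : ℝ) (u : ℝ) : ℝ := ρ * Real.sqrt (1 + μ * Real.sin u ^ 2)

noncomputable def gpTheta (μ ρ : ℝ) (y : ℝ) : ℝ := ∫ u in (0:ℝ)..y, (gpH μ ρ u)⁻¹

section basic
variable {μ ρ : ℝ}

lemma gp_inner_one_le (hμ0 : 0 < μ) (u : ℝ) : 1 ≤ 1 + μ * Real.sin u ^ 2 := by
  nlinarith [sq_nonneg (Real.sin u), hμ0.le]

lemma gp_inner_pos (hμ0 : 0 < μ) (u : ℝ) : 0 < 1 + μ * Real.sin u ^ 2 :=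
  lt_of_lt_of_le one_pos (gp_inner_one_le hμ0 u)

lemma gp_inner_le (hμ0 : 0 < μ) (u : ℝ) : 1 + μ * Real.sin u ^ 2 ≤ 1 + μ := by
  nlinarith [Real.sin_sq_le_one u, hμ0.le]

lemma gpH_pos (hμ0 : 0 < μ) (hρ : 0 < ρ) (u : ℝ) : 0 < gpH μ ρ u :=
  mul_pos hρ (Real.sqrt_pos.2 (gp_inner_pos hμ0 u))

lemma gpH_ge (hμ0 : 0 < μ) (hρ : 0 < ρ) (u : ℝ) : ρ ≤ gpH μ ρ u := by
  have h1 : (1:ℝ) ≤ Real.sqrt (1 + μ * Real.sin u ^ 2) := by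
    have h2 := Real.sqrt_le_sqrt (gp_inner_one_le hμ0 u)
    rwa [Real.sqrt_one] at h2
  calc ρ = ρ * 1 := by ring
  _ ≤ gpH μ ρ u := mul_le_mul_of_nonneg_left h1 hρ.le

lemma gpH_le (hμ0 : 0 < μ) (hρ : 0 < ρ) (u : ℝ) : gpH μ ρ u ≤ ρ * Real.sqrt (1 + μ) :=
  mul_le_mul_of_nonneg_left (Real.sqrt_le_sqrt (gp_inner_le hμ0 u)) hρ.le

lemma gp_contDiff_inner {n : WithTop ℕ∞} : ContDiff ℝ n (fun u : ℝ => 1 + μ * Real.sin u ^ 2) :=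
  contDiff_const.add (contDiff_const.mul (Real.contDiff_sin.pow 2))

lemma gp_contDiff_H (hμ0 : 0 < μ) {n : WithTop ℕ∞} : ContDiff ℝ n (gpH μ ρ) := by
  refine contDiff_const.mul ?_
  rw [contDiff_iff_contDiffAt]
  intro u
  exact (Real.contDiffAt_sqrt (ne_of_gt (gp_inner_pos hμ0 u))).comp u gp_contDiff_inner.contDiffAt

lemma gp_continuous_invH (hμ0 : 0 < μ) (hρ : 0 < ρ) : Continuous fun u => (gpH μ ρ u)⁻¹ :=
  ((gp_contDiff_H hμ0 (n := 1)).continuous).inv₀ fun u => (gpH_pos hμ0 hρ u).ne'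

lemma gp_hasDerivAt_Theta (hμ0 : 0 < μ) (hρ : 0 < ρ) (y : ℝ) :
    HasDerivAt (gpTheta μ ρ) (gpH μ ρ y)⁻¹ y := by
  exact intervalIntegral.integral_hasDerivAt_right
    ((gp_continuous_invH hμ0 hρ).intervalIntegrable _ _)
    ((gp_continuous_invH hμ0 hρ).stronglyMeasurable.stronglyMeasurableAtFilter)
    (gp_continuous_invH hμ0 hρ).continuousAt

lemma gp_strictMono_Theta (hμ0 : 0 < μ) (hρ : 0 < ρ) : StrictMono (gpTheta μ ρ) := by
  apply strictMono_of_deriv_pos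
  intro y
  rw [(gp_hasDerivAt_Theta hμ0 hρ y).deriv]
  exact inv_pos.2 (gpH_pos hμ0 hρ y)

lemma gp_Theta_zero : gpTheta μ ρ 0 = 0 := intervalIntegral.integral_same

lemma gp_Theta_ge (hμ0 : 0 < μ) (hρ : 0 < ρ) {y : ℝ} (hy : 0 ≤ y) :
    y * (ρ * Real.sqrt (1 + μ))⁻¹ ≤ gpTheta μ ρ y := by
  have h := intervalIntegral.integral_mono_on (μ := volume) hy
    (_root_.intervalIntegrable_const (c := (ρ * Real.sqrt (1 + μ))⁻¹))
    ((gp_continuous_invH hμ0 hρ).intervalIntegrable _ _)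
    (fun u _ => inv_anti₀ (gpH_pos hμ0 hρ u) (gpH_le hμ0 hρ u))
  rw [intervalIntegral.integral_const, smul_eq_mul, sub_zero] at h
  exact h

lemma gp_Theta_le (hμ0 : 0 < μ) (hρ : 0 < ρ) {y : ℝ} (hy : 0 ≤ y) :
    gpTheta μ ρ y ≤ y * ρ⁻¹ := by
  have h := intervalIntegral.integral_mono_on (μ := volume) hy
    ((gp_continuous_invH hμ0 hρ).intervalIntegrable _ _)
    (_root_.intervalIntegrable_const (c := ρ⁻¹))
    (fun u _ => inv_anti₀ hρ (gpH_ge hμ0 hρ u))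
  rw [intervalIntegral.integral_const, smul_eq_mul, sub_zero] at h
  exact h

lemma gp_Theta_le' (hμ0 : 0 < μ) (hρ : 0 < ρ) {y : ℝ} (hy : y ≤ 0) :
    gpTheta μ ρ y ≤ y * (ρ * Real.sqrt (1 + μ))⁻¹ := by
  have h0 : gpTheta μ ρ y = -∫ u in y..(0:ℝ), (gpH μ ρ u)⁻¹ := by
    rw [gpTheta, intervalIntegral.integral_symm]
  have h := intervalIntegral.integral_mono_on (μ := volume) hy
    (_root_.intervalIntegrable_const (c := (ρ * Real.sqrt (1 + μ))⁻¹))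
    ((gp_continuous_invH hμ0 hρ).intervalIntegrable _ _)
    (fun u _ => inv_anti₀ (gpH_pos hμ0 hρ u) (gpH_le hμ0 hρ u))
  rw [intervalIntegral.integral_const, smul_eq_mul] at h
  rw [h0]
  linarith

lemma gp_surjective_Theta (hμ0 : 0 < μ) (hρ : 0 < ρ) : Function.Surjective (gpTheta μ ρ) := by
  have hs : (0:ℝ) < Real.sqrt (1 + μ) := Real.sqrt_pos.2 (by linarith)
  have hC : 0 < (ρ * Real.sqrt (1 + μ))⁻¹ := inv_pos.2 (mul_pos hρ hs)
  have hcont : Continuous (gpTheta μ ρ) :=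
    continuous_iff_continuousAt.2 fun y => (gp_hasDerivAt_Theta hμ0 hρ y).continuousAt
  refine hcont.surjective ?_ ?_
  · refine tendsto_atTop_mono' atTop ?_ (Tendsto.atTop_mul_const hC tendsto_id)
    filter_upwards [eventually_ge_atTop (0:ℝ)] with y hy
    exact gp_Theta_ge hμ0 hρ hy
  · refine tendsto_atBot_mono' atBot ?_ (Tendsto.atBot_mul_const hC tendsto_id)
    filter_upwards [eventually_le_atBot (0:ℝ)] with y hy
    exact gp_Theta_le' hμ0 hρ hy

end basic

/-- Key construction: a global `C²` solution of `φ'' = -(ρ²(1-μ))·φ - c·φ³` with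
`φ (gpTheta μ ρ y) = A sin y` and `|φ| ≤ |A|`. -/
lemma gp_key {μ ρ c A : ℝ} (hμ0 : 0 < μ) (hρ : 0 < ρ) (hc : 0 < c)
    (hA : c * A ^ 2 = 2 * μ * ρ ^ 2) :
    ∃ φ : ℝ → ℝ, ContDiff ℝ 2 φ ∧
      (∀ x, deriv (deriv φ) x = -(ρ ^ 2 * (1 - μ)) * φ x - c * φ x ^ 3) ∧
      (∀ y, φ (gpTheta μ ρ y) = A * Real.sin y) ∧
      (∀ x, |φ x| ≤ |A|) := by
  -- the inverse function θ
  set E : ℝ ≃o ℝ := StrictMono.orderIsoOfSurjective (gpTheta μ ρ)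
    (gp_strictMono_Theta hμ0 hρ) (gp_surjective_Theta hμ0 hρ) with hE
  have hEcoe : (E : ℝ → ℝ) = gpTheta μ ρ :=
    StrictMono.coe_orderIsoOfSurjective _ _ _
  set θ : ℝ → ℝ := fun x => E.symm x with hθdef
  have hθcont : Continuous θ := E.symm.continuous
  have hΘθ : ∀ x, gpTheta μ ρ (θ x) = x := by
    intro x
    have := E.apply_symm_apply x
    rwa [← hEcoe]
  have hθΘ : ∀ y, θ (gpTheta μ ρ y) = y := by
    intro y
    have h := E.symm_apply_apply y
    rw [hEcoe] at h
    exact h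
  have hθD : ∀ x, HasDerivAt θ (gpH μ ρ (θ x)) x := by
    intro x
    have h := HasDerivAt.of_local_left_inverse (hθcont.continuousAt)
      (gp_hasDerivAt_Theta hμ0 hρ (θ x))
      (inv_ne_zero (gpH_pos hμ0 hρ (θ x)).ne')
      (Filter.Eventually.of_forall hΘθ)
    rwa [inv_inv] at h
  have hθdiff : Differentiable ℝ θ := fun x => (hθD x).differentiableAt
  have hdθ : deriv θ = fun x => gpH μ ρ (θ x) := funext fun x => (hθD x).deriv
  have hθ1 : ContDiff ℝ 1 θ := by
    rw [contDiff_one_iff_deriv]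
    exact ⟨hθdiff, by rw [hdθ]; exact (gp_contDiff_H hμ0 (n := 0)).continuous.comp hθcont⟩
  have hθ2 : ContDiff ℝ 2 θ := by
    rw [show (2 : WithTop ℕ∞) = 1 + 1 from rfl, contDiff_succ_iff_deriv]
    refine ⟨hθdiff, by simp, ?_⟩
    rw [hdθ]
    exact (gp_contDiff_H hμ0 (n := 1)).comp hθ1
  -- the solution
  refine ⟨fun x => A * Real.sin (θ x), ?_, ?_, ?_, ?_⟩
  · exact contDiff_const.mul ((Real.contDiff_sin.of_le le_top).comp hθ2)
  · -- the ODE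
    intro x
    have hφ' : ∀ z, HasDerivAt (fun x => A * Real.sin (θ x))
        (A * Real.cos (θ z) * gpH μ ρ (θ z)) z := by
      intro z
      have := ((Real.hasDerivAt_sin (θ z)).comp z (hθD z)).const_mul A
      simpa [mul_assoc] using this
    have hd1 : deriv (fun x => A * Real.sin (θ x)) =
        fun z => A * Real.cos (θ z) * gpH μ ρ (θ z) := funext fun z => (hφ' z).deriv
    rw [hd1]
    -- second derivative
    set T := θ x with hT
    set s := Real.sin T with hs
    set co := Real.cos T with hco
    set q := Real.sqrt (1 + μ * s ^ 2) with hq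
    have hqpos : 0 < q := Real.sqrt_pos.2 (gp_inner_pos hμ0 T)
    have hq2 : q ^ 2 = 1 + μ * s ^ 2 := Real.sq_sqrt (gp_inner_pos hμ0 T).le
    have hco2 : co ^ 2 = 1 - s ^ 2 := Real.cos_sq' T
    -- derivative of the inner function composed with θ
    have hinner : HasDerivAt (fun x => 1 + μ * Real.sin (θ x) ^ 2)
        ((μ * (2 * Real.sin T ^ 1 * co)) * (ρ * q)) x := by
      have h1 : HasDerivAt (fun u : ℝ => 1 + μ * Real.sin u ^ 2)
          (μ * (2 * Real.sin T ^ 1 * co)) T :=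
        (((Real.hasDerivAt_sin T).pow 2).const_mul μ).const_add 1
      have := h1.comp x (hθD x)
      exact this
    have hsq : HasDerivAt (fun x => Real.sqrt (1 + μ * Real.sin (θ x) ^ 2))
        (1 / (2 * q) * ((μ * (2 * Real.sin T ^ 1 * co)) * (ρ * q))) x := by
      exact (Real.hasDerivAt_sqrt (gp_inner_pos hμ0 T).ne').comp x hinner
    have hcosθ : HasDerivAt (fun x => A * Real.cos (θ x)) (A * (-s * (ρ * q))) x := by
      have := ((Real.hasDerivAt_cos T).comp x (hθD x)).const_mul A
      simpa [gpH, hq, mul_assoc] using this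
    have hprod : HasDerivAt (fun z => A * Real.cos (θ z) * gpH μ ρ (θ z))
        (A * (-s * (ρ * q)) * (ρ * q) +
          (A * co) * (ρ * (1 / (2 * q) * ((μ * (2 * Real.sin T ^ 1 * co)) * (ρ * q))))) x := by
      have h2 := hcosθ.mul (hsq.const_mul ρ)
      simp only [gpH]
      exact h2
    have := hprod.deriv
    rw [this]
    have hsT : Real.sin T ^ 1 = s := by rw [hs, pow_one]
    rw [hsT]
    have hqne : q ≠ 0 := hqpos.ne'
    have hstep : ρ * (1 / (2 * q) * ((μ * (2 * s * co)) * (ρ * q))) = μ * s * co * ρ ^ 2 := by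
      field_simp
    rw [hstep]
    have hexp : A * (-s * (ρ * q)) * (ρ * q) + (A * co) * (μ * s * co * ρ ^ 2) =
        -(ρ ^ 2 * (1 - μ)) * (A * s) - c * (A * s) ^ 3 := by
      linear_combination (-(A * s * ρ ^ 2)) * hq2 + (A * μ * s * ρ ^ 2) * hco2 + (s ^ 3 * A) * hA
    rw [hexp]
  · intro y
    show A * Real.sin (θ (gpTheta μ ρ y)) = A * Real.sin y
    rw [hθΘ y]
  · intro x
    rw [abs_mul]
    calc |A| * |Real.sin (θ x)| ≤ |A| * 1 :=
          mul_le_mul_of_nonneg_left (Real.abs_sin_le_one _) (abs_nonneg A)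
    _ = |A| := mul_one _

lemma gp_Theta_scale (μ ρ : ℝ) (hρ : ρ ≠ 0) (y : ℝ) :
    gpTheta μ ρ y = ρ⁻¹ * gpTheta μ 1 y := by
  simp only [gpTheta, gpH, one_mul, mul_inv]
  rw [intervalIntegral.integral_const_mul]

/-- for `g < 0`, local bifurcation of new quantum states from `(0, β_k)`
to the right of `β_k` in the attractive case. -/
theorem stmt_1 (ℏ m lam L g : ℝ) (hℏ : 0 < ℏ) (hm : 0 < m) (hL : 0 < L)
    (hg : g < 0) (k : ℕ) (hk : 1 ≤ k) (ε : ℝ) (hε : 0 < ε) :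
    ∃ β : ℝ, ∃ φ : ℝ → ℝ,
      betaCrit ℏ m lam L k < β ∧ β < betaCrit ℏ m lam L k + ε ∧
      IsGPSolution ℏ m lam g 0 L β φ ∧
      (∃ x ∈ Set.Icc (0:ℝ) L, φ x ≠ 0) ∧
      (∀ x ∈ Set.Icc (0:ℝ) L, |φ x| < ε) ∧
      IsGPSolution ℏ m lam g 0 L β (fun x => -φ x) ∧
      (∃ x ∈ Set.Icc (0:ℝ) L, φ x ≠ -φ x) := by
  have hπ := Real.pi_pos
  set κ := ℏ ^ 2 / (4 * m) with hκdef
  have hκ : 0 < κ := by positivity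
  set c := -g / κ with hcdef
  have hc : 0 < c := div_pos (neg_pos.2 hg) hκ
  have hκc : κ * c = -g := by rw [hcdef]; field_simp
  set ωk := (k : ℝ) * Real.pi / L with hωk
  have hk1 : (1:ℝ) ≤ (k:ℝ) := by exact_mod_cast hk
  have hωkpos : 0 < ωk := div_pos (mul_pos (by linarith) hπ) hL
  have hd1 : (0:ℝ) < 1 + 2*κ*ωk^2 := by positivity
  have hd2 : (0:ℝ) < 1 + 2*ωk^2 := by positivity
  set μ := min (1/2) (min (ε / (1 + 2*κ*ωk^2)) (c*ε^2 / (1 + 2*ωk^2))) with hμdef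
  have hμ0 : 0 < μ := by
    refine lt_min (by norm_num) (lt_min (by positivity) (by positivity))
  have hμ1 : μ < 1 := lt_of_le_of_lt (min_le_left _ _) (by norm_num)
  have hμa : μ * (1 + 2*κ*ωk^2) ≤ ε := by
    have h : μ ≤ ε / (1 + 2*κ*ωk^2) := (min_le_right _ _).trans (min_le_left _ _)
    exact (le_div_iff₀ hd1).mp h
  have hμb : μ * (1 + 2*ωk^2) ≤ c * ε^2 := by
    have h : μ ≤ c*ε^2 / (1 + 2*ωk^2) := (min_le_right _ _).trans (min_le_right _ _)
    exact (le_div_iff₀ hd2).mp h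
  set kπ := (k:ℝ) * Real.pi with hkπ
  have hkπpos : 0 < kπ := mul_pos (by linarith) hπ
  set J := gpTheta μ 1 kπ with hJ
  have hsqrt1μ : 0 < Real.sqrt (1+μ) := Real.sqrt_pos.2 (by linarith)
  have hJge : kπ * (Real.sqrt (1+μ))⁻¹ ≤ J := by
    have := gp_Theta_ge hμ0 one_pos hkπpos.le
    simpa using this
  have hJle : J ≤ kπ := by
    have := gp_Theta_le hμ0 one_pos (y := kπ) hkπpos.le
    simpa using this
  have hJpos : 0 < J := lt_of_lt_of_le (by positivity) hJge
  set ρ := J / L with hρdef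
  have hρ : 0 < ρ := div_pos hJpos hL
  have hΘL : gpTheta μ ρ kπ = L := by
    rw [gp_Theta_scale μ ρ hρ.ne' kπ, ← hJ, hρdef]
    field_simp
  have hρle : ρ ≤ ωk := by
    rw [hρdef, hωk]
    gcongr
  have hρ2 : ρ^2 ≤ ωk^2 := pow_le_pow_left₀ hρ.le hρle 2
  have hρsq_ge : ωk^2 ≤ ρ^2 * (1+μ) := by
    have h1 : ωk ≤ ρ * Real.sqrt (1+μ) := by
      have h2 : kπ ≤ J * Real.sqrt (1+μ) := by
        have := mul_le_mul_of_nonneg_right hJge hsqrt1μ.le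
        rw [mul_assoc, inv_mul_cancel₀ hsqrt1μ.ne', mul_one] at this
        exact this
      rw [hρdef, hωk, div_mul_eq_mul_div]
      gcongr
    have h3 : ωk*ωk ≤ (ρ*Real.sqrt (1+μ))*(ρ*Real.sqrt (1+μ)) :=
      mul_le_mul h1 h1 hωkpos.le (by positivity)
    have h4 : Real.sqrt (1+μ) * Real.sqrt (1+μ) = 1+μ := Real.mul_self_sqrt (by linarith)
    have h5 : ρ^2*(Real.sqrt (1+μ)*Real.sqrt (1+μ)) = ρ^2*(1+μ) := by rw [h4]
    linarith [h3, h5]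
  set A := ρ * Real.sqrt (2*μ/c) with hAdef
  have hA2 : A^2 = ρ^2 * (2*μ/c) := by
    rw [hAdef, mul_pow, Real.sq_sqrt (by positivity)]
  have hApos : 0 < A := mul_pos hρ (Real.sqrt_pos.2 (by positivity))
  have hA : c * A^2 = 2 * μ * ρ^2 := by
    rw [hA2]; field_simp
  clear_value κ c ωk μ kπ J ρ A
  obtain ⟨φ, hφ2, hODE, hφΘ, hφbd⟩ := gp_key hμ0 hρ hc hA
  have hAlt : A < ε := by
    have h2 : 2*μ*ωk^2 < c*ε^2 := by linarith [hμb, hμ0]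
    have h1 : A^2 < ε^2 := by
      rw [hA2]
      rw [show ρ^2 * (2*μ/c) = (2*μ*ρ^2)/c by ring]
      rw [div_lt_iff₀ hc]
      linarith [mul_le_mul_of_nonneg_left hρ2 (by linarith : (0:ℝ) ≤ 2*μ), h2]
    exact lt_of_pow_lt_pow_left₀ 2 hε.le h1
  set β := ℏ * lam - κ * (ρ^2*(1-μ)) with hβdef
  have hbc : betaCrit ℏ m lam L k = ℏ * lam - κ * ωk^2 := by
    rw [betaCrit, ← hκdef, ← hkπ, ← hωk]
  -- the special point
  set x₀ := gpTheta μ ρ (Real.pi/2) with hx₀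
  have hx₀mem : x₀ ∈ Set.Icc (0:ℝ) L := by
    constructor
    · have h := (gp_strictMono_Theta hμ0 hρ).monotone (show (0:ℝ) ≤ Real.pi/2 by linarith)
      rwa [gp_Theta_zero] at h
    · have h := (gp_strictMono_Theta hμ0 hρ).monotone
        (show Real.pi/2 ≤ kπ by rw [hkπ]; have h1 := le_mul_of_one_le_left hπ.le hk1; linarith)
      rwa [hΘL] at h
  have hφx₀ : φ x₀ = A := by
    rw [hx₀, hφΘ, Real.sin_pi_div_two, mul_one]
  have hφ0 : φ 0 = 0 := by
    have h0 : gpTheta μ ρ 0 = 0 := gp_Theta_zero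
    have h1 := hφΘ 0
    rw [h0, Real.sin_zero, mul_zero] at h1
    exact h1
  have hφL : φ L = 0 := by
    rw [← hΘL, hφΘ, hkπ, Real.sin_nat_mul_pi, mul_zero]
  clear_value β x₀
  refine ⟨β, φ, ?_, ?_, ⟨hφ2.continuous.continuousOn, hφ2.contDiffOn, ?_, hφ0, hφL⟩,
    ⟨x₀, hx₀mem, by rw [hφx₀]; exact hApos.ne'⟩,
    fun x _ => lt_of_le_of_lt (hφbd x) (by rwa [abs_of_pos hApos]),
    ⟨hφ2.continuous.neg.continuousOn, hφ2.contDiffOn.neg, ?_, by show -φ 0 = 0; rw [hφ0, neg_zero],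
      by show -φ L = 0; rw [hφL, neg_zero]⟩,
    ⟨x₀, hx₀mem, by rw [hφx₀]; intro h; linarith⟩⟩
  · rw [hbc, hβdef]
    have t1 : 0 < μ*ρ^2 := by positivity
    have g1 : ρ^2*(1-μ) < ωk^2 := by linarith [hρ2, t1]
    have g2 : κ*(ρ^2*(1-μ)) < κ*ωk^2 := mul_lt_mul_of_pos_left g1 hκ
    linarith
  · rw [hbc, hβdef]
    have e1 : ωk^2 - ρ^2*(1-μ) ≤ 2*μ*ωk^2 := by
      linarith [hρsq_ge, mul_le_mul_of_nonneg_left hρ2 hμ0.le]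
    have e2 : κ*(ωk^2 - ρ^2*(1-μ)) ≤ κ*(2*μ*ωk^2) := mul_le_mul_of_nonneg_left e1 hκ.le
    have e3 : κ*(2*μ*ωk^2) < ε := by linarith [hμa, hμ0]
    linarith
  · intro x hx
    rw [hODE x, hβdef]
    linear_combination (φ x ^ 3) * hκc + (-(ρ^2*(1-μ)*φ x + c*φ x^3)) * hκdef
  · intro x hx
    have eneg : (deriv fun y => -φ y) = fun y => -deriv φ y := funext fun y => deriv.neg
    rw [eneg, deriv.fun_neg, hODE x, hβdef]
    linear_combination (-(φ x ^ 3)) * hκc + ((ρ^2*(1-μ)*φ x + c*φ x^3)) * hκdef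
end

section
/- Let g ≠ 0 and fix an integer k ≥ 1. Suppose (β_n)_{n∈ℕ} is a sequence of real numbers with β_n → β_k and (φ_n)_{n∈ℕ} is a sequence of GP solutions on [0,L] with parameter β_n, each continuously differentiable on [0,L] and not identically zero, such that sup_{x∈[0,L]}|φ_n(x)| + sup_{x∈[0,L]}|φ_n'(x)| → 0. Then there exist signs s_n ∈ {−1, +1} such that s_n·φ_n / (∫₀^L φ_n(x)² dx)^{1/2} converges in L²(0,L) to the normalized eigenfunction e_k(x) = √(2/L)·sin(kπx/L). (Bifurcating quantum states have, to leading order, the profile of the k-th Dirichlet eigenfunction.) -/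
open Set MeasureTheory intervalIntegral Filter Topology

noncomputable def CKc (ω L : ℝ) : ℝ := (Real.exp (max 1 (ω^2) * L) - 1) / max 1 (ω^2)

lemma CKc_nonneg (ω L : ℝ) (hL : 0 ≤ L) : 0 ≤ CKc ω L := by
  have hK1 : (1:ℝ) ≤ max 1 (ω^2) := le_max_left _ _
  have h : (1:ℝ) ≤ Real.exp (max 1 (ω^2) * L) := by
    rw [← Real.exp_zero]
    exact Real.exp_le_exp.2 (by positivity)
  have h2 : 0 ≤ Real.exp (max 1 (ω^2) * L) - 1 := by linarith
  have h3 : (0:ℝ) < max 1 (ω^2) := lt_of_lt_of_le one_pos hK1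
  exact div_nonneg h2 h3.le

lemma key_est {L ω c γ M : ℝ} (hL : 0 < L) (hω : 0 < ω)
    {φ : ℝ → ℝ} (hφ1 : ContDiffOn ℝ 1 φ (Set.Icc 0 L))
    (hφ2 : ContDiffOn ℝ 2 φ (Set.Ioo 0 L))
    (hode : ∀ x ∈ Set.Ioo 0 L, deriv (deriv φ) x = c * φ x + γ * φ x ^ 3)
    (hφ0 : φ 0 = 0)
    (hM : ∀ x ∈ Set.Icc 0 L, |φ x| ≤ M) :
    ∀ x ∈ Set.Icc 0 L,
      |φ x - derivWithin φ (Set.Icc 0 L) 0 / ω * Real.sin (ω * x)|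
        ≤ M * ((|c + ω ^ 2| + |γ| * M ^ 2) * CKc ω L) := by
  have hωne : ω ≠ 0 := ne_of_gt hω
  set K : ℝ := max 1 (ω^2) with hKdef
  have hK1 : (1:ℝ) ≤ K := le_max_left _ _
  have hKpos : (0:ℝ) < K := lt_of_lt_of_le one_pos hK1
  set Kn : NNReal := K.toNNReal with hKndef
  have hKn : (Kn : ℝ) = K := Real.coe_toNNReal _ hKpos.le
  set A := derivWithin φ (Set.Icc 0 L) 0 with hAdef
  set w := derivWithin φ (Set.Icc 0 L) with hwdef
  have hM0 : 0 ≤ M := le_trans (abs_nonneg _) (hM 0 ⟨le_refl 0, hL.le⟩)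
  set εf : ℝ := (|c + ω^2| + |γ| * M^2) * M with hεfdef
  have hεf0 : 0 ≤ εf := by positivity
  have hud : UniqueDiffOn ℝ (Set.Icc (0:ℝ) L) := uniqueDiffOn_Icc hL
  have hwc : ContinuousOn w (Set.Icc 0 L) := hφ1.continuousOn_derivWithin hud le_rfl
  have hweq : ∀ t ∈ Set.Ioo (0:ℝ) L, w t = deriv φ t := fun t ht =>
    derivWithin_of_mem_nhds (Icc_mem_nhds ht.1 ht.2)
  set f : ℝ → ℝ × ℝ := fun t => (φ t, w t) with hfdef
  set F : ℝ → ℝ × ℝ := fun t => (w t, c * φ t + γ * φ t ^ 3) with hFdef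
  set g : ℝ → ℝ × ℝ := fun t => (A / ω * Real.sin (ω * t), A * Real.cos (ω * t)) with hgdef
  set G : ℝ → ℝ × ℝ := fun t => (A * Real.cos (ω * t), -(A * ω) * Real.sin (ω * t)) with hGdef
  set vf : ℝ → ℝ × ℝ → ℝ × ℝ := fun _ p => (p.2, -(ω^2) * p.1) with hvfdef
  -- Lipschitz bound for the vector field
  have hlip : ∀ t, LipschitzWith Kn (vf t) := by
    intro t
    apply LipschitzWith.of_dist_le_mul
    intro p q
    rw [hKn, Prod.dist_eq, Prod.dist_eq]
    have hd1 : dist p.1 q.1 ≤ max (dist p.1 q.1) (dist p.2 q.2) := le_max_left _ _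
    have hd2 : dist p.2 q.2 ≤ max (dist p.1 q.1) (dist p.2 q.2) := le_max_right _ _
    have hdnn : (0:ℝ) ≤ max (dist p.1 q.1) (dist p.2 q.2) :=
      le_trans dist_nonneg hd1
    apply max_le
    · calc dist (vf t p).1 (vf t q).1 = dist p.2 q.2 := rfl
        _ ≤ max (dist p.1 q.1) (dist p.2 q.2) := hd2
        _ ≤ K * max (dist p.1 q.1) (dist p.2 q.2) := le_mul_of_one_le_left hdnn hK1
    · calc dist (vf t p).2 (vf t q).2 = |(-(ω^2)) * (p.1 - q.1)| := by
            simp only [hvfdef, Real.dist_eq]; ring_nf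
        _ = ω^2 * dist p.1 q.1 := by
            rw [abs_mul, abs_neg, abs_of_nonneg (sq_nonneg ω), Real.dist_eq]
        _ ≤ K * max (dist p.1 q.1) (dist p.2 q.2) :=
            mul_le_mul (le_max_right _ _) hd1 dist_nonneg hKpos.le
  -- g is an exact solution
  have hg' : ∀ t : ℝ, HasDerivAt g (G t) t := by
    intro t
    have h1 : HasDerivAt (fun t : ℝ => ω * t) ω t := by
      simpa using (hasDerivAt_id t).const_mul ω
    have hsin : HasDerivAt (fun t : ℝ => Real.sin (ω * t)) (Real.cos (ω * t) * ω) t :=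
      (Real.hasDerivAt_sin (ω * t)).comp t h1
    have hcos : HasDerivAt (fun t : ℝ => Real.cos (ω * t)) (-Real.sin (ω * t) * ω) t :=
      (Real.hasDerivAt_cos (ω * t)).comp t h1
    have hc1 : HasDerivAt (fun t : ℝ => A / ω * Real.sin (ω * t)) (A * Real.cos (ω * t)) t := by
      have := hsin.const_mul (A / ω)
      exact this.congr_deriv (by rw [mul_comm (Real.cos _) ω, ← mul_assoc, div_mul_cancel₀ A hωne])
    have hc2 : HasDerivAt (fun t : ℝ => A * Real.cos (ω * t)) (-(A * ω) * Real.sin (ω * t)) t := by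
      have := hcos.const_mul A
      exact this.congr_deriv (by ring)
    exact hc1.prodMk hc2
  have hgc : Continuous g := by
    apply Continuous.prodMk
    · exact continuous_const.mul (Real.continuous_sin.comp (continuous_const.mul continuous_id))
    · exact continuous_const.mul (Real.continuous_cos.comp (continuous_const.mul continuous_id))
  -- Main Gronwall estimate from interior starting points
  have main : ∀ x₀ ∈ Set.Ioo (0:ℝ) L, ∀ t ∈ Set.Icc x₀ L,
      dist (f t) (g t) ≤ gronwallBound (dist (f x₀) (g x₀)) Kn (εf + 0) (t - x₀) := by
    intro x₀ hx₀
    have hsub : Set.Icc x₀ L ⊆ Set.Icc 0 L := Set.Icc_subset_Icc hx₀.1.le le_rfl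
    have hsubo : Set.Ico x₀ L ⊆ Set.Ioo 0 L := fun t ht => ⟨lt_of_lt_of_le hx₀.1 ht.1, ht.2⟩
    apply dist_le_of_approx_trajectories_ODE (v := vf) (f' := F) (g' := G) hlip
    · exact (hφ1.continuousOn.mono hsub).prodMk (hwc.mono hsub)
    · intro t ht
      have htI : t ∈ Set.Ioo 0 L := hsubo ht
      have hO : Set.Ioo (0:ℝ) L ∈ 𝓝 t := isOpen_Ioo.mem_nhds htI
      have hφd : DifferentiableAt ℝ φ t :=
        (hφ2.contDiffAt hO).differentiableAt (by norm_num)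
      have h1 : HasDerivAt φ (w t) t := by
        rw [hweq t htI]; exact hφd.hasDerivAt
      have hdd : ContDiffOn ℝ 1 (deriv φ) (Set.Ioo 0 L) :=
        hφ2.deriv_of_isOpen isOpen_Ioo (by norm_num)
      have hφ'd : DifferentiableAt ℝ (deriv φ) t :=
        (hdd.contDiffAt hO).differentiableAt one_ne_zero
      have heq : w =ᶠ[𝓝 t] deriv φ := eventually_of_mem hO (fun y hy => hweq y hy)
      have h2 : HasDerivAt w (c * φ t + γ * φ t ^ 3) t := by
        rw [← hode t htI]
        exact hφ'd.hasDerivAt.congr_of_eventuallyEq heq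
      exact ((h1.prodMk h2).hasDerivWithinAt)
    · intro t ht
      have htI : t ∈ Set.Ioo 0 L := hsubo ht
      have hMt : |φ t| ≤ M := hM t ⟨htI.1.le, htI.2.le⟩
      have : dist (F t) (vf t (f t)) = |c * φ t + γ * φ t ^ 3 - (-(ω^2) * φ t)| := by
        rw [Prod.dist_eq]
        simp [hFdef, hvfdef, hfdef, Real.dist_eq, dist_self]
      rw [this]
      have habs : |c * φ t + γ * φ t ^ 3 - (-(ω^2) * φ t)|
          ≤ |c + ω^2| * |φ t| + |γ| * |φ t|^3 := by
        have h1 : c * φ t + γ * φ t ^ 3 - (-(ω^2) * φ t)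
            = (c + ω^2) * φ t + γ * φ t ^ 3 := by ring
        rw [h1]
        calc |(c + ω^2) * φ t + γ * φ t ^ 3| ≤ |(c + ω^2) * φ t| + |γ * φ t ^ 3| :=
              abs_add_le _ _
          _ = |c + ω^2| * |φ t| + |γ| * |φ t|^3 := by
              rw [abs_mul, abs_mul, abs_pow]
      refine habs.trans ?_
      have h3 : |φ t|^3 ≤ M^3 := pow_le_pow_left₀ (abs_nonneg _) hMt 3
      have : |c + ω^2| * |φ t| + |γ| * |φ t|^3 ≤ |c + ω^2| * M + |γ| * M^3 := by
        gcongr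
      refine this.trans (le_of_eq ?_)
      rw [hεfdef]; ring
    · exact hgc.continuousOn
    · intro t ht; exact (hg' t).hasDerivWithinAt
    · intro t ht
      have : vf t (g t) = G t := by
        simp only [hvfdef, hgdef, hGdef]
        congr 1
        field_simp
      rw [this, dist_self]
    · exact le_refl _
  -- Take the limit x₀ → 0⁺
  intro x hx
  rcases eq_or_lt_of_le hx.1 with h0 | hx0
  · rw [← h0]
    simp [hφ0]
    have h1 := CKc_nonneg ω L hL.le
    positivity
  · have hxL : x ≤ L := hx.2
    have hne : (𝓝[Set.Ioo 0 x] (0:ℝ)).NeBot := by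
      rw [← mem_closure_iff_nhdsWithin_neBot, closure_Ioo (ne_of_lt hx0)]
      exact ⟨le_refl 0, hx0.le⟩
    have hEb : ∀ᶠ x₀ in 𝓝[Set.Ioo 0 x] (0:ℝ),
        |φ x - A / ω * Real.sin (ω * x)|
          ≤ dist (f x₀) (g x₀) * Real.exp (K * L) + εf * CKc ω L := by
      filter_upwards [self_mem_nhdsWithin] with x₀ hx₀
      have hx₀I : x₀ ∈ Set.Ioo 0 L := ⟨hx₀.1, lt_of_lt_of_le hx₀.2 hxL⟩
      have h := main x₀ hx₀I x ⟨hx₀.2.le, hxL⟩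
      have h0 : |φ x - A / ω * Real.sin (ω * x)| ≤ dist (f x) (g x) := by
        rw [Prod.dist_eq]
        refine le_trans (le_of_eq ?_) (le_max_left _ _)
        rw [Real.dist_eq]
      refine h0.trans (h.trans ?_)
      have hKne : (Kn : ℝ) ≠ 0 := by rw [hKn]; exact ne_of_gt hKpos
      rw [gronwallBound_of_K_ne_0 hKne, hKn]
      have hδ : (0:ℝ) ≤ dist (f x₀) (g x₀) := dist_nonneg
      have ht1 : K * (x - x₀) ≤ K * L := by
        apply mul_le_mul_of_nonneg_left _ hKpos.le
        have := hx₀.1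
        linarith
      have hexp : Real.exp (K * (x - x₀)) ≤ Real.exp (K * L) := Real.exp_le_exp.2 ht1
      have hterm2 : (εf + 0) / K * (Real.exp (K * (x - x₀)) - 1) ≤ εf * CKc ω L := by
        rw [add_zero]
        have hCK : CKc ω L = (Real.exp (K * L) - 1) / K := rfl
        rw [hCK]
        have h1 : Real.exp (K * (x - x₀)) - 1 ≤ Real.exp (K * L) - 1 := by linarith
        calc εf / K * (Real.exp (K * (x - x₀)) - 1)
            ≤ εf / K * (Real.exp (K * L) - 1) :=
              mul_le_mul_of_nonneg_left h1 (by positivity)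
          _ = εf * ((Real.exp (K * L) - 1) / K) := by ring
      have hterm1 : dist (f x₀) (g x₀) * Real.exp (K * (x - x₀))
          ≤ dist (f x₀) (g x₀) * Real.exp (K * L) :=
        mul_le_mul_of_nonneg_left hexp hδ
      linarith
    have hf0 : f 0 = g 0 := by
      simp [hfdef, hgdef, hφ0, hAdef, hwdef]
    have hdist0 : Tendsto (fun x₀ => dist (f x₀) (g x₀)) (𝓝[Set.Ioo 0 x] (0:ℝ)) (𝓝 0) := by
      have hmono : 𝓝[Set.Ioo 0 x] (0:ℝ) ≤ 𝓝[Set.Icc 0 L] (0:ℝ) :=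
        nhdsWithin_mono _ (fun y hy => ⟨hy.1.le, le_trans hy.2.le hxL⟩)
      have hfc : ContinuousWithinAt f (Set.Icc 0 L) 0 :=
        ((hφ1.continuousOn.prodMk hwc) 0 ⟨le_refl 0, hL.le⟩)
      have h1 : Tendsto f (𝓝[Set.Ioo 0 x] (0:ℝ)) (𝓝 (f 0)) := hfc.tendsto.mono_left hmono
      have h2 : Tendsto g (𝓝[Set.Ioo 0 x] (0:ℝ)) (𝓝 (g 0)) :=
        (hgc.tendsto 0).mono_left nhdsWithin_le_nhds
      have := h1.dist h2
      rwa [hf0, dist_self] at this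
    have hlim : Tendsto (fun x₀ => dist (f x₀) (g x₀) * Real.exp (K * L) + εf * CKc ω L)
        (𝓝[Set.Ioo 0 x] (0:ℝ)) (𝓝 (0 * Real.exp (K * L) + εf * CKc ω L)) :=
      ((hdist0.mul_const _).add_const _)
    have hfin := ge_of_tendsto hlim hEb
    rw [zero_mul, zero_add] at hfin
    refine hfin.trans (le_of_eq ?_)
    rw [hεfdef]; ring

lemma sin_sq_integral {L ω : ℝ} (hω : ω ≠ 0) (k : ℕ) (hωL : ω * L = k * Real.pi) :
    ∫ x in (0:ℝ)..L, Real.sin (ω * x) ^ 2 = L / 2 := by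
  rw [intervalIntegral.integral_comp_mul_left (fun x => Real.sin x ^ 2) hω]
  rw [mul_zero, integral_sin_sq, hωL, Real.sin_nat_mul_pi]
  simp
  field_simp
  linarith [hωL]

set_option maxHeartbeats 4000000 in
/-- bifurcating quantum states have, to leading order, the profile of
the `k`-th Dirichlet eigenfunction `e_k(x) = √(2/L)·sin(kπx/L)`. -/
theorem stmt_2 (ℏ m lam L g : ℝ) (hℏ : 0 < ℏ) (hm : 0 < m) (hL : 0 < L)
    (hg : g ≠ 0) (k : ℕ) (hk : 1 ≤ k)
    (β : ℕ → ℝ) (hβ : Filter.Tendsto β Filter.atTop (nhds (betaCrit ℏ m lam L k)))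
    (φ : ℕ → ℝ → ℝ)
    (hsol : ∀ n, IsGPSolution ℏ m lam g 0 L (β n) (φ n))
    (hC1 : ∀ n, ContDiffOn ℝ 1 (φ n) (Set.Icc 0 L))
    (hne : ∀ n, ∃ x ∈ Set.Icc (0:ℝ) L, φ n x ≠ 0)
    (hsmall : Filter.Tendsto
      (fun n => (sSup ((fun x => |φ n x|) '' Set.Icc (0:ℝ) L)) +
        (sSup ((fun x => |deriv (φ n) x|) '' Set.Icc (0:ℝ) L)))
      Filter.atTop (nhds 0)) :
    ∃ s : ℕ → ℝ, (∀ n, s n = 1 ∨ s n = -1) ∧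
      Filter.Tendsto
        (fun n => ∫ x in (0:ℝ)..L,
          (s n * φ n x / Real.sqrt (∫ y in (0:ℝ)..L, (φ n y) ^ 2) -
            Real.sqrt (2 / L) * Real.sin ((k : ℝ) * Real.pi * x / L)) ^ 2)
        Filter.atTop (nhds 0) := by
  have hπ := Real.pi_pos
  have hk1 : (1:ℝ) ≤ (k:ℝ) := by exact_mod_cast hk
  set ω : ℝ := (k : ℝ) * Real.pi / L with hωdef
  have hω : 0 < ω := by
    apply div_pos (mul_pos (lt_of_lt_of_le one_pos hk1) hπ) hL
  have hωL : ω * L = (k : ℝ) * Real.pi := by rw [hωdef]; field_simp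
  set γ : ℝ := g * (4 * m / ℏ^2) with hγdef
  set M : ℕ → ℝ := fun n => sSup ((fun x => |φ n x|) '' Set.Icc (0:ℝ) L) with hMdef
  set c : ℕ → ℝ := fun n => (β n - ℏ * lam) * (4 * m / ℏ^2) with hcdef
  set A : ℕ → ℝ := fun n => derivWithin (φ n) (Set.Icc 0 L) 0 with hAdef
  set ρ : ℕ → ℝ := fun n => (|c n + ω^2| + |γ| * (M n)^2) * CKc ω L with hρdef
  -- basic facts about M
  have hMb : ∀ n, ∀ x ∈ Set.Icc (0:ℝ) L, |φ n x| ≤ M n := by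
    intro n x hx
    apply le_csSup (isCompact_Icc.bddAbove_image ((hsol n).1.abs))
    exact ⟨x, hx, rfl⟩
  have hM0 : ∀ n, 0 ≤ M n := fun n =>
    le_trans (abs_nonneg _) (hMb n 0 ⟨le_refl 0, hL.le⟩)
  have hMpos : ∀ n, 0 < M n := by
    intro n
    obtain ⟨x, hx, hxne⟩ := hne n
    exact lt_of_lt_of_le (abs_pos.2 hxne) (hMb n x hx)
  have hMtend : Tendsto M atTop (𝓝 0) := by
    apply squeeze_zero hM0 _ hsmall
    intro n
    have h2 : 0 ≤ sSup ((fun x => |deriv (φ n) x|) '' Set.Icc (0:ℝ) L) := by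
      apply Real.sSup_nonneg
      rintro y ⟨x, hx, rfl⟩
      exact abs_nonneg _
    linarith
  -- c → -ω²
  have hctend : Tendsto c atTop (𝓝 (-ω^2)) := by
    have h1 : Tendsto (fun n => (β n - ℏ * lam) * (4 * m / ℏ^2)) atTop
        (𝓝 ((betaCrit ℏ m lam L k - ℏ * lam) * (4 * m / ℏ^2))) :=
      (hβ.sub_const _).mul_const _
    have h2 : (betaCrit ℏ m lam L k - ℏ * lam) * (4 * m / ℏ^2) = -ω^2 := by
      rw [betaCrit, hωdef]
      field_simp
      ring
    rw [← h2]
    exact h1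
  -- ρ → 0 and ρ ≥ 0
  have hρ0 : ∀ n, 0 ≤ ρ n := by
    intro n
    have := CKc_nonneg ω L hL.le
    have h1 : 0 ≤ |c n + ω^2| + |γ| * (M n)^2 := by positivity
    exact mul_nonneg h1 this
  have hρtend : Tendsto ρ atTop (𝓝 0) := by
    have h1 : Tendsto (fun n => (|c n + ω^2| + |γ| * (M n)^2) * CKc ω L) atTop
        (𝓝 ((|(-ω^2) + ω^2| + |γ| * (0:ℝ)^2) * CKc ω L)) := by
      apply Tendsto.mul_const
      exact ((hctend.add_const (ω^2)).abs).add (tendsto_const_nhds.mul (hMtend.pow 2))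
    simpa using h1
  -- the ODE in normalized form
  have hode : ∀ n, ∀ x ∈ Set.Ioo (0:ℝ) L,
      deriv (deriv (φ n)) x = c n * φ n x + γ * (φ n x)^3 := by
    intro n x hx
    have h := (hsol n).2.2.1 x hx
    have hℏ0 : (ℏ:ℝ) ≠ 0 := ne_of_gt hℏ
    have hm0 : (m:ℝ) ≠ 0 := ne_of_gt hm
    have h4 : deriv (deriv (φ n)) x
        = ((β n - ℏ*lam) * φ n x + g * (φ n x)^3) / (ℏ^2/(4*m)) := by
      rw [eq_div_iff (by positivity)]
      linarith
    rw [h4, hcdef, hγdef]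
    field_simp
  -- key estimate
  have hkey : ∀ n, ∀ x ∈ Set.Icc (0:ℝ) L,
      |φ n x - A n / ω * Real.sin (ω * x)| ≤ M n * ρ n := by
    intro n x hx
    exact key_est hL hω (hC1 n) (hsol n).2.1 (hode n) (hsol n).2.2.2.1 (hMb n) x hx
  -- choose the signs
  refine ⟨fun n => if 0 ≤ A n then 1 else -1,
    fun n => by by_cases h : 0 ≤ A n <;> simp [h], ?_⟩
  set Is : ℝ := L / (2 * ω^2) with hIsdef
  have hIspos : 0 < Is := by positivity
  have hsIs : 0 < Real.sqrt Is := Real.sqrt_pos.2 hIspos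
  set c₂ : ℝ := 2 * Real.sqrt 2 / (ω * Real.sqrt Is)
      + 6 * L * Real.sqrt 2 / (ω^3 * Is * Real.sqrt Is) with hc2def
  have hc2pos : 0 < c₂ := by positivity
  -- squeeze
  apply squeeze_zero' (f := fun n => ∫ x in (0:ℝ)..L,
      ((if 0 ≤ A n then (1:ℝ) else -1) * φ n x / Real.sqrt (∫ y in (0:ℝ)..L, (φ n y) ^ 2) -
        Real.sqrt (2 / L) * Real.sin ((k : ℝ) * Real.pi * x / L)) ^ 2)
    (g := fun n => L * (c₂ * ρ n)^2)
  · filter_upwards with n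
    apply intervalIntegral.integral_nonneg hL.le
    intro x hx
    positivity
  · -- main eventual bound
    filter_upwards [hρtend.eventually (eventually_le_nhds (by norm_num : (0:ℝ) < 1/24))]
      with n hρsmall
    set sn : ℝ := if 0 ≤ A n then (1:ℝ) else -1 with hsndef
    -- |A n| is bounded below
    have hA_low : ω * M n / 2 ≤ |A n| := by
      obtain ⟨xs, hxs, hmax⟩ := isCompact_Icc.exists_isMaxOn
        (Set.nonempty_Icc.2 hL.le) ((hsol n).1.abs)
      have hMle : M n ≤ |φ n xs| := by
        apply csSup_le ((Set.nonempty_Icc.2 hL.le).image _)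
        rintro y ⟨x, hx, rfl⟩
        exact hmax hx
      have h1 : |φ n xs| ≤ |A n| / ω + M n * ρ n := by
        have h2 := hkey n xs hxs
        have h3 : |A n / ω * Real.sin (ω * xs)| ≤ |A n| / ω := by
          rw [abs_mul, abs_div, abs_of_pos hω]
          calc |A n| / ω * |Real.sin (ω * xs)| ≤ |A n| / ω * 1 := by
                apply mul_le_mul_of_nonneg_left (Real.abs_sin_le_one _) (by positivity)
            _ = |A n| / ω := mul_one _
        calc |φ n xs| ≤ |A n / ω * Real.sin (ω * xs)| + |φ n xs - A n / ω * Real.sin (ω * xs)| := by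
              have := abs_sub_abs_le_abs_sub (φ n xs) (A n / ω * Real.sin (ω * xs))
              linarith [abs_add_le (A n / ω * Real.sin (ω * xs)) (φ n xs - A n / ω * Real.sin (ω * xs))]
          _ ≤ |A n| / ω + M n * ρ n := add_le_add h3 h2
      have hρhalf : ρ n ≤ 1/2 := le_trans hρsmall (by norm_num)
      have h5 : M n * ρ n ≤ M n / 2 := by
        calc M n * ρ n ≤ M n * (1/2) := mul_le_mul_of_nonneg_left hρhalf (hM0 n)
          _ = M n / 2 := by ring
      have h6 : M n / 2 ≤ |A n| / ω := by linarith [hMle.trans h1]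
      rw [div_le_div_iff₀ (by norm_num : (0:ℝ) < 2) hω] at h6
      linarith
    have hApos : 0 < |A n| :=
      lt_of_lt_of_le (div_pos (mul_pos hω (hMpos n)) two_pos) hA_low
    have hAne : A n ≠ 0 := abs_pos.1 hApos
    have hsnA : sn * A n = |A n| := by
      by_cases h : 0 ≤ A n
      · simp [hsndef, h, abs_of_nonneg h]
      · simp [hsndef, h, abs_of_neg (lt_of_not_ge h)]
    have hMA : M n ≤ 2 * |A n| / ω := by
      rw [le_div_iff₀ hω]
      linarith
    -- pointwise closeness with coefficient |A|
    have hkeyA : ∀ x ∈ Set.Icc (0:ℝ) L,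
        |φ n x - A n / ω * Real.sin (ω * x)| ≤ 2 * |A n| * ρ n / ω := by
      intro x hx
      refine (hkey n x hx).trans ?_
      calc M n * ρ n ≤ (2 * |A n| / ω) * ρ n := mul_le_mul_of_nonneg_right hMA (hρ0 n)
        _ = 2 * |A n| * ρ n / ω := by ring
    -- the integral J
    set J : ℝ := ∫ y in (0:ℝ)..L, (φ n y) ^ 2 with hJdef
    have hcont : ContinuousOn (φ n) (Set.Icc 0 L) := (hsol n).1
    have hIφ2 : IntervalIntegrable (fun y => (φ n y)^2) volume 0 L := by
      apply ContinuousOn.intervalIntegrable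
      rw [Set.uIcc_of_le hL.le]
      exact hcont.pow 2
    have hcsin : Continuous (fun x : ℝ => A n / ω * Real.sin (ω * x)) :=
      continuous_const.mul (Real.continuous_sin.comp (continuous_const.mul continuous_id))
    have hIsin : IntervalIntegrable (fun y => (A n / ω * Real.sin (ω * y))^2) volume 0 L :=
      ((hcsin.pow 2)).intervalIntegrable _ _
    have hsin2 : (∫ y in (0:ℝ)..L, (A n / ω * Real.sin (ω * y))^2) = (A n)^2 * Is := by
      have h1 : (fun y : ℝ => (A n / ω * Real.sin (ω * y))^2)
          = fun y : ℝ => (A n / ω)^2 * (Real.sin (ω * y))^2 := by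
        funext y; ring
      rw [h1, intervalIntegral.integral_const_mul, sin_sq_integral (ne_of_gt hω) k hωL,
        hIsdef]
      field_simp
    have hJclose : |J - (A n)^2 * Is| ≤ 6 * L * (A n)^2 * ρ n / ω^2 := by
      have h1 : J - (A n)^2 * Is
          = ∫ y in (0:ℝ)..L, ((φ n y)^2 - (A n / ω * Real.sin (ω * y))^2) := by
        rw [intervalIntegral.integral_sub hIφ2 hIsin, hsin2]
      rw [h1]
      have h2 := intervalIntegral.norm_integral_le_of_norm_le_const
        (C := (2 * |A n| * ρ n / ω) * (3 * |A n| / ω))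
        (f := fun y => (φ n y)^2 - (A n / ω * Real.sin (ω * y))^2)
        (a := (0:ℝ)) (b := L) ?_
      · rw [Real.norm_eq_abs] at h2
        refine h2.trans ?_
        rw [sub_zero, abs_of_pos hL]
        have : 2 * |A n| * ρ n / ω * (3 * |A n| / ω) * L = 6 * L * |A n|^2 * ρ n / ω^2 := by
          ring
        rw [this, sq_abs]
      · intro y hy
        rw [Set.uIoc_of_le hL.le] at hy
        have hyI : y ∈ Set.Icc (0:ℝ) L := ⟨hy.1.le, hy.2⟩
        show ‖(φ n y)^2 - (A n / ω * Real.sin (ω * y))^2‖ ≤ 2 * |A n| * ρ n / ω * (3 * |A n| / ω)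
        rw [Real.norm_eq_abs]
        have hfact : (φ n y)^2 - (A n / ω * Real.sin (ω * y))^2
            = (φ n y - A n / ω * Real.sin (ω * y)) * (φ n y + A n / ω * Real.sin (ω * y)) := by
          ring
        rw [hfact, abs_mul]
        have hb1 : |φ n y - A n / ω * Real.sin (ω * y)| ≤ 2 * |A n| * ρ n / ω := hkeyA y hyI
        have hb2 : |φ n y + A n / ω * Real.sin (ω * y)| ≤ 3 * |A n| / ω := by
          have h3 : |A n / ω * Real.sin (ω * y)| ≤ |A n| / ω := by
            rw [abs_mul, abs_div, abs_of_pos hω]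
            calc |A n| / ω * |Real.sin (ω * y)| ≤ |A n| / ω * 1 :=
                  mul_le_mul_of_nonneg_left (Real.abs_sin_le_one _) (by positivity)
              _ = |A n| / ω := mul_one _
          calc |φ n y + A n / ω * Real.sin (ω * y)|
              ≤ |φ n y| + |A n / ω * Real.sin (ω * y)| := abs_add_le _ _
            _ ≤ M n + |A n| / ω := add_le_add (hMb n y hyI) h3
            _ ≤ 2 * |A n| / ω + |A n| / ω := by linarith
            _ = 3 * |A n| / ω := by ring
        exact mul_le_mul hb1 hb2 (abs_nonneg _) (by have := hρ0 n; positivity)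
    -- normalize: u = J / A²
    set u : ℝ := J / (A n)^2 with hudef
    have hA2 : 0 < (A n)^2 := by positivity
    have hJu : J = (A n)^2 * u := by
      rw [hudef]; field_simp
    have huIs : |u - Is| ≤ 6 * L * ρ n / ω^2 := by
      have h1 : |u - Is| * (A n)^2 = |J - (A n)^2 * Is| := by
        have e : J - (A n)^2 * Is = (u - Is) * (A n)^2 := by rw [hJu]; ring
        rw [e, abs_mul, abs_of_pos hA2]
      have h2 : |u - Is| * (A n)^2 ≤ (6 * L * ρ n / ω^2) * (A n)^2 := by
        rw [h1]
        calc |J - (A n)^2 * Is| ≤ 6 * L * (A n)^2 * ρ n / ω^2 := hJclose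
          _ = (6 * L * ρ n / ω^2) * (A n)^2 := by ring
      exact le_of_mul_le_mul_right h2 hA2
    have hbnd : 6 * L * ρ n / ω^2 ≤ Is / 2 := by
      have e : Is / 2 = 6 * L * (1/24) / ω^2 := by
        rw [hIsdef]; field_simp; ring
      rw [e]
      have h6 : 6 * L * ρ n ≤ 6 * L * (1/24) :=
        mul_le_mul_of_nonneg_left hρsmall (by positivity)
      apply div_le_div_of_nonneg_right h6 (by positivity)
    have hulow : Is / 2 ≤ u := by
      have := abs_le.1 huIs
      linarith
    have hupos : 0 < u := lt_of_lt_of_le (by positivity) hulow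
    have hsu : 0 < Real.sqrt u := Real.sqrt_pos.2 hupos
    have hsqrtJ : Real.sqrt J = |A n| * Real.sqrt u := by
      rw [hJu, Real.sqrt_mul (sq_nonneg _), Real.sqrt_sq_eq_abs]
    have hsulow : Real.sqrt Is / Real.sqrt 2 ≤ Real.sqrt u := by
      have h1 : Real.sqrt (Is / 2) ≤ Real.sqrt u := Real.sqrt_le_sqrt hulow
      rwa [Real.sqrt_div hIspos.le] at h1
    -- pointwise bound for the integrand
    have hs2pos : (0:ℝ) < Real.sqrt 2 := by positivity
    have hsqJpos : 0 < Real.sqrt J := by rw [hsqrtJ]; positivity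
    have hsqrt2L : Real.sqrt (2 / L) = 1 / (ω * Real.sqrt Is) := by
      have h1 : Real.sqrt Is * Real.sqrt (2/L) = 1/ω := by
        rw [← Real.sqrt_mul hIspos.le]
        have e : Is * (2/L) = (1/ω)^2 := by
          rw [hIsdef]; field_simp
        rw [e, Real.sqrt_sq (by positivity)]
      have h2 : Real.sqrt (2/L) = (1/ω) / Real.sqrt Is := by
        rw [eq_div_iff (ne_of_gt hsIs), mul_comm]
        exact h1
      rw [h2, div_div]
    have hpt : ∀ x ∈ Set.Icc (0:ℝ) L,
        |sn * φ n x / Real.sqrt J - Real.sqrt (2 / L) * Real.sin ((k : ℝ) * Real.pi * x / L)|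
          ≤ c₂ * ρ n := by
      intro x hx
      have harg : (k : ℝ) * Real.pi * x / L = ω * x := by rw [hωdef]; ring
      rw [harg, hsqrt2L]
      have hdecomp : sn * φ n x / Real.sqrt J - 1 / (ω * Real.sqrt Is) * Real.sin (ω * x)
          = sn * (φ n x - A n / ω * Real.sin (ω * x)) / Real.sqrt J
            + Real.sin (ω * x) * (sn * A n / (ω * Real.sqrt J) - 1 / (ω * Real.sqrt Is)) := by
        field_simp
        ring
      rw [hdecomp, hsnA]
      have hsn1 : |sn| = 1 := by
        by_cases h : 0 ≤ A n <;> simp [hsndef, h]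
      have hρn := hρ0 n
      -- term 1
      have ht1 : |sn * (φ n x - A n / ω * Real.sin (ω * x)) / Real.sqrt J|
          ≤ 2 * Real.sqrt 2 / (ω * Real.sqrt Is) * ρ n := by
        rw [abs_div, abs_mul, hsn1, one_mul, abs_of_pos hsqJpos, hsqrtJ]
        calc |φ n x - A n / ω * Real.sin (ω * x)| / (|A n| * Real.sqrt u)
            ≤ (2 * |A n| * ρ n / ω) / (|A n| * (Real.sqrt Is / Real.sqrt 2)) := by
              apply div_le_div₀ (by positivity) (hkeyA x hx)
                (by positivity)
                (mul_le_mul_of_nonneg_left hsulow (abs_nonneg _))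
          _ = 2 * Real.sqrt 2 / (ω * Real.sqrt Is) * ρ n := by
              have hAne' : |A n| ≠ 0 := ne_of_gt hApos
              field_simp
      -- term 2
      have ht2 : abs (Real.sin (ω * x) * (|A n| / (ω * Real.sqrt J) - 1 / (ω * Real.sqrt Is)))
          ≤ 6 * L * Real.sqrt 2 / (ω^3 * Is * Real.sqrt Is) * ρ n := by
        rw [abs_mul]
        have hsin1 : |Real.sin (ω*x)| ≤ 1 := Real.abs_sin_le_one _
        have hinner : abs (|A n| / (ω * Real.sqrt J) - 1 / (ω * Real.sqrt Is))
            ≤ 6 * L * Real.sqrt 2 / (ω^3 * Is * Real.sqrt Is) * ρ n := by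
          have e1 : |A n| / (ω * Real.sqrt J) = 1 / (ω * Real.sqrt u) := by
            rw [hsqrtJ]
            have hAne' : |A n| ≠ 0 := ne_of_gt hApos
            field_simp
          rw [e1]
          have e2 : 1 / (ω * Real.sqrt u) - 1 / (ω * Real.sqrt Is)
              = (Real.sqrt Is - Real.sqrt u) / (ω * Real.sqrt u * Real.sqrt Is) := by
            field_simp
          rw [e2, abs_div, abs_of_pos (by positivity : (0:ℝ) < ω * Real.sqrt u * Real.sqrt Is)]
          have h3 : |Real.sqrt Is - Real.sqrt u| * (Real.sqrt Is + Real.sqrt u) = |Is - u| := by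
            rw [← abs_of_pos (by positivity : (0:ℝ) < Real.sqrt Is + Real.sqrt u), ← abs_mul]
            congr 1
            have e3 : Real.sqrt Is ^ 2 = Is := Real.sq_sqrt hIspos.le
            have e4 : Real.sqrt u ^ 2 = u := Real.sq_sqrt hupos.le
            linear_combination e3 - e4
          have h4 : |Real.sqrt Is - Real.sqrt u| ≤ |Is - u| / Real.sqrt Is := by
            rw [le_div_iff₀ hsIs]
            calc |Real.sqrt Is - Real.sqrt u| * Real.sqrt Is
                ≤ |Real.sqrt Is - Real.sqrt u| * (Real.sqrt Is + Real.sqrt u) := by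
                  apply mul_le_mul_of_nonneg_left _ (abs_nonneg _)
                  linarith [Real.sqrt_nonneg u]
              _ = |Is - u| := h3
          calc |Real.sqrt Is - Real.sqrt u| / (ω * Real.sqrt u * Real.sqrt Is)
              ≤ (|Is - u| / Real.sqrt Is)
                  / (ω * (Real.sqrt Is / Real.sqrt 2) * Real.sqrt Is) := by
                apply div_le_div₀ (by positivity) h4 (by positivity)
                have := mul_le_mul_of_nonneg_left hsulow hω.le
                have h5 : ω * (Real.sqrt Is / Real.sqrt 2) ≤ ω * Real.sqrt u := this
                exact mul_le_mul_of_nonneg_right h5 hsIs.le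
              _ = Real.sqrt 2 * |Is - u| / (ω * Is * Real.sqrt Is) := by
                have e5 : Real.sqrt Is * Real.sqrt Is = Is := Real.mul_self_sqrt hIspos.le
                have hane : Real.sqrt Is ≠ 0 := ne_of_gt hsIs
                have hbne : Real.sqrt 2 ≠ 0 := ne_of_gt hs2pos
                have hωne' : ω ≠ 0 := ne_of_gt hω
                have hq : ω * (Real.sqrt Is / Real.sqrt 2) * Real.sqrt Is = ω * Is / Real.sqrt 2 := by
                  linear_combination (ω / Real.sqrt 2) * e5
                rw [hq, div_div_eq_mul_div]
                ring
              _ ≤ Real.sqrt 2 * (6 * L * ρ n / ω^2) / (ω * Is * Real.sqrt Is) := by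
                apply div_le_div_of_nonneg_right _ (by positivity)
                have huIs' : |Is - u| ≤ 6 * L * ρ n / ω^2 := by rwa [abs_sub_comm]
                exact mul_le_mul_of_nonneg_left huIs' hs2pos.le
              _ = 6 * L * Real.sqrt 2 / (ω^3 * Is * Real.sqrt Is) * ρ n := by
                field_simp
        calc |Real.sin (ω*x)| * abs (|A n| / (ω * Real.sqrt J) - 1 / (ω * Real.sqrt Is))
            ≤ 1 * (6 * L * Real.sqrt 2 / (ω^3 * Is * Real.sqrt Is) * ρ n) :=
              mul_le_mul hsin1 hinner (abs_nonneg _) one_pos.le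
          _ = 6 * L * Real.sqrt 2 / (ω^3 * Is * Real.sqrt Is) * ρ n := one_mul _
      calc |sn * (φ n x - A n / ω * Real.sin (ω * x)) / Real.sqrt J
            + Real.sin (ω * x) * (|A n| / (ω * Real.sqrt J) - 1 / (ω * Real.sqrt Is))|
          ≤ |sn * (φ n x - A n / ω * Real.sin (ω * x)) / Real.sqrt J|
            + abs (Real.sin (ω * x) * (|A n| / (ω * Real.sqrt J) - 1 / (ω * Real.sqrt Is))) :=
            abs_add_le _ _
        _ ≤ 2 * Real.sqrt 2 / (ω * Real.sqrt Is) * ρ n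
            + 6 * L * Real.sqrt 2 / (ω^3 * Is * Real.sqrt Is) * ρ n := add_le_add ht1 ht2
        _ = c₂ * ρ n := by rw [hc2def]; ring
    -- integrate
    have hcontd : ContinuousOn (fun x => (sn * φ n x / Real.sqrt J
        - Real.sqrt (2 / L) * Real.sin ((k : ℝ) * Real.pi * x / L)) ^ 2) (Set.uIcc 0 L) := by
      rw [Set.uIcc_of_le hL.le]
      apply ContinuousOn.pow
      apply ContinuousOn.sub
      · exact (continuousOn_const.mul hcont).div_const _
      · exact (continuous_const.mul
          (Real.continuous_sin.comp ((continuous_mul_left ((k:ℝ) * Real.pi)).div_const L))).continuousOn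
    have hid : IntervalIntegrable (fun x => (sn * φ n x / Real.sqrt J
        - Real.sqrt (2 / L) * Real.sin ((k : ℝ) * Real.pi * x / L)) ^ 2) volume 0 L :=
      hcontd.intervalIntegrable
    calc (∫ x in (0:ℝ)..L, (sn * φ n x / Real.sqrt J
          - Real.sqrt (2 / L) * Real.sin ((k : ℝ) * Real.pi * x / L)) ^ 2)
        ≤ ∫ _x in (0:ℝ)..L, (c₂ * ρ n)^2 := by
          apply intervalIntegral.integral_mono_on hL.le hid intervalIntegrable_const
          intro x hx
          have h := hpt x hx
          exact sq_le_sq' (by linarith [(abs_le.1 h).1]) (abs_le.1 h).2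
      _ = L * (c₂ * ρ n)^2 := by
          rw [intervalIntegral.integral_const]
          simp
  · have h1 : Tendsto (fun n => L * (c₂ * ρ n)^2) atTop (𝓝 (L * (c₂ * 0)^2)) :=
      (((hρtend.const_mul c₂)).pow 2).const_mul L
    simpa using h1
end

section
/- Let g > 0, let a < b be real numbers, and let φ be a GP solution on [a,b] with parameter β that is continuously differentiable on [a,b] and not identically zero on [a,b]. Then ℏλ − β > (ℏ²/(4m))·(π/(b − a))². In particular, as b − a → 0 one must have β → −∞, so no nonzero solution can be supported on an arbitrarily short subinterval for bounded β. (Quantitative form of Case 3 in the proof that distinct bifurcated branches do not intersect.) -/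
open Set MeasureTheory intervalIntegral Filter Topology

lemma wirtinger {a b : ℝ} (hab : a < b) {φ ψ : ℝ → ℝ}
    (hφc : ContinuousOn φ (Icc a b)) (hψc : ContinuousOn ψ (Icc a b))
    (hd : ∀ x ∈ Ioo a b, HasDerivAt φ (ψ x) x)
    (hda : HasDerivWithinAt φ (ψ a) (Icc a b) a)
    (hdb : HasDerivWithinAt φ (ψ b) (Icc a b) b)
    (ha0 : φ a = 0) (hb0 : φ b = 0) :
    (Real.pi / (b - a)) ^ 2 * ∫ x in a..b, (φ x) ^ 2 ≤ ∫ x in a..b, (ψ x) ^ 2 := by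
  set k : ℝ := Real.pi / (b - a) with hk
  have hba : (0:ℝ) < b - a := by linarith
  have hkpos : 0 < k := div_pos Real.pi_pos hba
  have hkba : k * (b - a) = Real.pi := by rw [hk]; field_simp
  set w : ℝ → ℝ := fun x => k * Real.cos (k * (x - a)) / Real.sin (k * (x - a)) with hw
  have hsinpos : ∀ x ∈ Ioo a b, 0 < Real.sin (k * (x - a)) := by
    intro x hx
    apply Real.sin_pos_of_pos_of_lt_pi (mul_pos hkpos (by linarith [hx.1]))
    have : k * (x - a) < k * (b - a) :=
      mul_lt_mul_of_pos_left (by linarith [hx.2]) hkpos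
    linarith [hkba ▸ this]
  set h₀ : ℝ → ℝ := fun x => (ψ x) ^ 2 - k ^ 2 * (φ x) ^ 2 with hh₀
  have hh₀c : ContinuousOn h₀ (Icc a b) :=
    (hψc.pow 2).sub (continuousOn_const.mul (hφc.pow 2))
  have hh₀i : IntervalIntegrable h₀ volume a b := by
    apply ContinuousOn.intervalIntegrable; rwa [uIcc_of_le hab.le]
  set G : ℝ → ℝ := fun x => ∫ t in a..x, h₀ t with hG
  have hGc : ContinuousOn G (Icc a b) := by
    have := continuousOn_primitive_interval (f := h₀) (μ := volume) (a := a) (b := b)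
      (by rw [uIcc_of_le hab.le]; exact hh₀c.integrableOn_compact isCompact_Icc)
    rwa [uIcc_of_le hab.le] at this
  -- derivative of G on Ioo
  have hGd : ∀ x ∈ Ioo a b, HasDerivAt G (h₀ x) x := by
    intro x hx
    have hmem : Icc a b ∈ 𝓝 x := Icc_mem_nhds hx.1 hx.2
    have hca : ContinuousAt h₀ x := (hh₀c.continuousWithinAt (Ioo_subset_Icc_self hx)).continuousAt hmem
    refine integral_hasDerivAt_right ?_ ?_ hca
    · exact hh₀i.mono_set (by rw [uIcc_of_le hab.le, uIcc_of_le hx.1.le]; exact Icc_subset_Icc le_rfl hx.2.le)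
    · exact ⟨Icc a b, hmem, hh₀c.aestronglyMeasurable measurableSet_Icc⟩
  set F : ℝ → ℝ := fun x => w x * (φ x) ^ 2 with hF
  -- derivative of F on Ioo
  have hwd : ∀ x ∈ Ioo a b, HasDerivAt w (-k ^ 2 - (w x) ^ 2) x := by
    intro x hx
    have hs := hsinpos x hx
    have hu : HasDerivAt (fun y : ℝ => k * (y - a)) k x := by
      simpa using ((hasDerivAt_id x).sub_const a).const_mul k
    have hcos : HasDerivAt (fun y => k * Real.cos (k * (y - a)))
        (k * (-Real.sin (k * (x - a)) * k)) x := (hu.cos).const_mul k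
    have hsin : HasDerivAt (fun y => Real.sin (k * (y - a)))
        (Real.cos (k * (x - a)) * k) x := hu.sin
    have := hcos.div hsin hs.ne'
    refine HasDerivAt.congr_deriv (f := w) this ?_
    have hpy := Real.sin_sq_add_cos_sq (k * (x - a))
    simp only [hw]; field_simp
  have hFd : ∀ x ∈ Ioo a b,
      HasDerivAt F ((-k ^ 2 - (w x) ^ 2) * (φ x) ^ 2 + w x * (2 * φ x * ψ x)) x := by
    intro x hx
    have h1 := (hwd x hx).mul ((hd x hx).pow 2)
    refine HasDerivAt.congr_deriv (f := F) h1 ?_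
    simp only [Pi.pow_apply]; ring
  set D : ℝ → ℝ := fun x => G x - F x with hD
  have hDd : ∀ x ∈ Ioo a b, HasDerivAt D ((ψ x - w x * φ x) ^ 2) x := by
    intro x hx
    have := (hGd x hx).sub (hFd x hx)
    refine HasDerivAt.congr_deriv (f := D) this ?_
    simp only [hh₀]
    ring
  -- D monotone on Ioo
  have hDmono : MonotoneOn D (Ioo a b) := by
    apply monotoneOn_of_deriv_nonneg (convex_Ioo a b)
    · exact fun x hx => ((hDd x hx).differentiableAt).continuousAt.continuousWithinAt
    · intro x hx
      rw [interior_Ioo] at hx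
      exact ((hDd x hx).differentiableAt).differentiableWithinAt
    · intro x hx
      rw [interior_Ioo] at hx
      rw [(hDd x hx).deriv]
      positivity
  -- limit of F at a
  have hne_a : (𝓝[Ioo a b] a).NeBot := by
    rw [← mem_closure_iff_nhdsWithin_neBot, closure_Ioo hab.ne]
    exact ⟨le_rfl, hab.le⟩
  have hne_b : (𝓝[Ioo a b] b).NeBot := by
    rw [← mem_closure_iff_nhdsWithin_neBot, closure_Ioo hab.ne]
    exact ⟨hab.le, le_rfl⟩
  have hsub : Ioo a b ⊆ Icc a b := Ioo_subset_Icc_self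
  -- y / sin y → 1 at 0+
  have hslope : Tendsto (fun y : ℝ => y / Real.sin y) (𝓝[>] (0:ℝ)) (𝓝 1) := by
    have h1 : Tendsto (fun y : ℝ => Real.sin y / y) (𝓝[≠] (0:ℝ)) (𝓝 1) := by
      have := (Real.hasDerivAt_sin 0)
      rw [hasDerivAt_iff_tendsto_slope] at this
      have heq : slope Real.sin 0 = fun y => Real.sin y / y := by
        ext y; simp [slope_def_field]
      rw [heq, Real.cos_zero] at this
      exact this
    have h2 : Tendsto (fun y : ℝ => Real.sin y / y) (𝓝[>] (0:ℝ)) (𝓝 1) :=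
      h1.mono_left (nhdsWithin_mono _ fun y hy => ne_of_gt hy)
    have h3 := h2.inv₀ one_ne_zero
    simpa [inv_div] using h3
  -- limits of F at a and b
  have hev : ∀ᶠ x in 𝓝[Ioo a b] a, x ∈ Ioo a b := eventually_mem_nhdsWithin
  have hevb : ∀ᶠ x in 𝓝[Ioo a b] b, x ∈ Ioo a b := eventually_mem_nhdsWithin
  have hFa : Tendsto F (𝓝[Ioo a b] a) (𝓝 0) := by
    have hcos : Tendsto (fun x => Real.cos (k * (x - a))) (𝓝[Ioo a b] a) (𝓝 1) := by
      have hca : ContinuousAt (fun x => Real.cos (k * (x - a))) a := by fun_prop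
      have := hca.tendsto.mono_left (nhdsWithin_le_nhds (s := Ioo a b))
      simpa using this
    have hu : Tendsto (fun x => k * (x - a)) (𝓝[Ioo a b] a) (𝓝[>] (0:ℝ)) := by
      rw [tendsto_nhdsWithin_iff]
      constructor
      · have hca : ContinuousAt (fun x => k * (x - a)) a := by fun_prop
        have := hca.tendsto.mono_left (nhdsWithin_le_nhds (s := Ioo a b))
        simpa using this
      · exact hev.mono fun x hx => mul_pos hkpos (by simp; linarith [hx.1])
    have hratio : Tendsto (fun x => k * (x - a) / Real.sin (k * (x - a)))
        (𝓝[Ioo a b] a) (𝓝 1) := hslope.comp hu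
    have hφ0 : Tendsto φ (𝓝[Ioo a b] a) (𝓝 0) := by
      have := (hφc.continuousWithinAt (left_mem_Icc.mpr hab.le)).mono_left
        (nhdsWithin_mono _ hsub)
      rwa [ha0] at this
    have hslopea : Tendsto (fun x => φ x / (x - a)) (𝓝[Ioo a b] a) (𝓝 (ψ a)) := by
      have h1 := hda
      rw [hasDerivWithinAt_iff_tendsto_slope] at h1
      have hmono : 𝓝[Ioo a b] a ≤ 𝓝[Icc a b \ {a}] a :=
        nhdsWithin_mono _ (fun x hx => ⟨hsub hx, ne_of_gt hx.1⟩)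
      have h2 := h1.mono_left hmono
      have heq : slope φ a = fun x => φ x / (x - a) := by
        ext y; simp [slope_def_field, ha0]
      rwa [heq] at h2
    have hprod : Tendsto (fun x => φ x * (φ x / (x - a))) (𝓝[Ioo a b] a) (𝓝 0) := by
      simpa using hφ0.mul hslopea
    have hbig := (hcos.mul hratio).mul hprod
    rw [show (1:ℝ) * 1 * 0 = 0 by ring] at hbig
    refine Tendsto.congr' ?_ hbig
    filter_upwards [hev] with x hx
    have hs := (hsinpos x hx).ne'
    have hxa : x - a ≠ 0 := sub_ne_zero.mpr (ne_of_gt hx.1)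
    simp only [hF, hw]
    field_simp
  have hFb : Tendsto F (𝓝[Ioo a b] b) (𝓝 0) := by
    have hcos : Tendsto (fun x => Real.cos (k * (x - a))) (𝓝[Ioo a b] b) (𝓝 (-1)) := by
      have hca : ContinuousAt (fun x => Real.cos (k * (x - a))) b := by fun_prop
      have := hca.tendsto.mono_left (nhdsWithin_le_nhds (s := Ioo a b))
      simpa [show k * (b - a) = Real.pi from hkba, Real.cos_pi] using this
    have hu : Tendsto (fun x => k * (b - x)) (𝓝[Ioo a b] b) (𝓝[>] (0:ℝ)) := by
      rw [tendsto_nhdsWithin_iff]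
      constructor
      · have hca : ContinuousAt (fun x => k * (b - x)) b := by fun_prop
        have := hca.tendsto.mono_left (nhdsWithin_le_nhds (s := Ioo a b))
        simpa using this
      · exact hevb.mono fun x hx => mul_pos hkpos (by simp; linarith [hx.2])
    have hratio : Tendsto (fun x => k * (b - x) / Real.sin (k * (b - x)))
        (𝓝[Ioo a b] b) (𝓝 1) := hslope.comp hu
    have hφ0 : Tendsto φ (𝓝[Ioo a b] b) (𝓝 0) := by
      have := (hφc.continuousWithinAt (right_mem_Icc.mpr hab.le)).mono_left
        (nhdsWithin_mono _ hsub)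
      rwa [hb0] at this
    have hslopeb : Tendsto (fun x => φ x / (b - x)) (𝓝[Ioo a b] b) (𝓝 (-ψ b)) := by
      have h1 := hdb
      rw [hasDerivWithinAt_iff_tendsto_slope] at h1
      have hmono : 𝓝[Ioo a b] b ≤ 𝓝[Icc a b \ {b}] b :=
        nhdsWithin_mono _ (fun x hx => ⟨hsub hx, ne_of_lt hx.2⟩)
      have h2 := (h1.mono_left hmono).neg
      have heq : (fun x => -slope φ b x) = fun x => φ x / (b - x) := by
        ext y; rw [slope_def_field, hb0, sub_zero, ← div_neg, neg_sub]
      rwa [heq] at h2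
    have hprod : Tendsto (fun x => φ x * (φ x / (b - x))) (𝓝[Ioo a b] b) (𝓝 0) := by
      simpa using hφ0.mul hslopeb
    have hbig := (hcos.mul hratio).mul hprod
    rw [show (-1:ℝ) * 1 * 0 = 0 by ring] at hbig
    refine Tendsto.congr' ?_ hbig
    filter_upwards [hevb] with x hx
    have hsin_eq : Real.sin (k * (x - a)) = Real.sin (k * (b - x)) := by
      rw [show k * (x - a) = Real.pi - k * (b - x) by rw [← hkba]; ring, Real.sin_pi_sub]
    have hs : Real.sin (k * (b - x)) ≠ 0 := by rw [← hsin_eq]; exact (hsinpos x hx).ne'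
    have hxb : b - x ≠ 0 := sub_ne_zero.mpr (ne_of_gt hx.2)
    simp only [hF, hw, hsin_eq]
    field_simp
  -- limits of G
  have hGa : Tendsto G (𝓝[Ioo a b] a) (𝓝 0) := by
    have := (hGc.continuousWithinAt (left_mem_Icc.mpr hab.le)).mono_left
      (nhdsWithin_mono _ hsub)
    simpa [hG, integral_same] using this
  have hGb : Tendsto G (𝓝[Ioo a b] b) (𝓝 (G b)) :=
    (hGc.continuousWithinAt (right_mem_Icc.mpr hab.le)).mono_left
      (nhdsWithin_mono _ hsub)
  have hDa : Tendsto D (𝓝[Ioo a b] a) (𝓝 0) := by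
    simpa using hGa.sub hFa
  have hDb : Tendsto D (𝓝[Ioo a b] b) (𝓝 (G b)) := by
    simpa using hGb.sub hFb
  have hDnonneg : ∀ x ∈ Ioo a b, 0 ≤ D x := by
    intro x hx
    refine le_of_tendsto hDa ?_
    have h1 : ∀ᶠ t in 𝓝[Ioo a b] a, t < x :=
      eventually_of_mem (nhdsWithin_le_nhds (Iio_mem_nhds hx.1)) (fun t ht => ht)
    filter_upwards [h1, hev] with t htx htIoo
    exact hDmono htIoo hx htx.le
  have hGb0 : 0 ≤ G b :=
    ge_of_tendsto hDb (hevb.mono fun t ht => hDnonneg t ht)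
  -- conclude
  have hφi : IntervalIntegrable (fun x => (φ x) ^ 2) volume a b := by
    apply ContinuousOn.intervalIntegrable; rw [uIcc_of_le hab.le]; exact hφc.pow 2
  have hψi : IntervalIntegrable (fun x => (ψ x) ^ 2) volume a b := by
    apply ContinuousOn.intervalIntegrable; rw [uIcc_of_le hab.le]; exact hψc.pow 2
  have hGbeq : G b = (∫ x in a..b, (ψ x) ^ 2) - k ^ 2 * ∫ x in a..b, (φ x) ^ 2 := by
    simp only [hG, hh₀]
    rw [integral_sub hψi (hφi.const_mul _), intervalIntegral.integral_const_mul]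
  rw [hGbeq] at hGb0
  linarith

theorem stmt_5' (ℏ m lam g : ℝ) (hℏ : 0 < ℏ) (hm : 0 < m) (hg : 0 < g)
    (a b β : ℝ) (hab : a < b) (φ : ℝ → ℝ)
    (hsolc : ContinuousOn φ (Set.Icc a b))
    (hsol2 : ContDiffOn ℝ 2 φ (Set.Ioo a b))
    (hode : ∀ x ∈ Set.Ioo a b,
      -(ℏ ^ 2 / (4 * m)) * deriv (deriv φ) x + (β - ℏ * lam) * φ x + g * (φ x) ^ 3 = 0)
    (ha0 : φ a = 0) (hb0 : φ b = 0)
    (hC1 : ContDiffOn ℝ 1 φ (Set.Icc a b))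
    (hne : ∃ x ∈ Set.Icc a b, φ x ≠ 0) :
    ℏ * lam - β > ℏ ^ 2 / (4 * m) * (Real.pi / (b - a)) ^ 2 := by
  have hC : (0:ℝ) < ℏ ^ 2 / (4 * m) := by positivity
  set C : ℝ := ℏ ^ 2 / (4 * m) with hCdef
  set ψ : ℝ → ℝ := derivWithin φ (Icc a b) with hψdef
  have hUD : UniqueDiffOn ℝ (Icc a b) := uniqueDiffOn_Icc hab
  have hψc : ContinuousOn ψ (Icc a b) := hC1.continuousOn_derivWithin hUD le_rfl
  have hφdiff : DifferentiableOn ℝ φ (Icc a b) := hC1.differentiableOn one_ne_zero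
  have hdW : ∀ x ∈ Icc a b, HasDerivWithinAt φ (ψ x) (Icc a b) x := fun x hx =>
    (hφdiff x hx).hasDerivWithinAt
  have hd : ∀ x ∈ Ioo a b, HasDerivAt φ (ψ x) x := fun x hx =>
    (hdW x (Ioo_subset_Icc_self hx)).hasDerivAt (Icc_mem_nhds hx.1 hx.2)
  -- second derivative
  have hd2 : ∀ x ∈ Ioo a b, HasDerivAt ψ (deriv (deriv φ) x) x := by
    intro x hx
    have hder : ContDiffOn ℝ 1 (deriv φ) (Ioo a b) :=
      hsol2.deriv_of_isOpen isOpen_Ioo (by norm_num)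
    have h1 : HasDerivAt (deriv φ) (derivWithin (deriv φ) (Ioo a b) x) x :=
      ((hder.differentiableOn one_ne_zero) x hx).hasDerivWithinAt.hasDerivAt
        (isOpen_Ioo.mem_nhds hx)
    have h2 : derivWithin (deriv φ) (Ioo a b) x = deriv (deriv φ) x :=
      derivWithin_of_isOpen isOpen_Ioo hx
    rw [h2] at h1
    have heq : ψ =ᶠ[𝓝 x] deriv φ :=
      eventually_of_mem (isOpen_Ioo.mem_nhds hx) (fun y hy => ((hd y hy).deriv).symm)
    exact h1.congr_of_eventuallyEq heq
  -- ODE rewritten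
  have hode' : ∀ x ∈ Ioo a b, deriv (deriv φ) x = ((β - ℏ * lam) * φ x + g * (φ x) ^ 3) / C := by
    intro x hx
    have := hode x hx
    field_simp
    linarith
  -- energy identity via FTC
  set h : ℝ → ℝ := fun x => ((β - ℏ * lam) * (φ x) ^ 2 + g * (φ x) ^ 4) / C + (ψ x) ^ 2
    with hhdef
  have hhc : ContinuousOn h (Icc a b) := by
    apply ContinuousOn.add _ (hψc.pow 2)
    exact (((continuousOn_const.mul (hsolc.pow 2)).add
      (continuousOn_const.mul (hsolc.pow 4))).div_const C)
  have hhi : IntervalIntegrable h volume a b := by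
    apply ContinuousOn.intervalIntegrable; rwa [uIcc_of_le hab.le]
  have hHc : ContinuousOn (fun x => ψ x * φ x) (Icc a b) := hψc.mul hsolc
  have hHder : ∀ x ∈ Ioo a b, HasDerivWithinAt (fun x => ψ x * φ x) (h x) (Ioi x) x := by
    intro x hx
    have h1 := (hd2 x hx).mul (hd x hx)
    rw [hode' x hx] at h1
    have hxn : φ x ≠ 0 ∨ True := Or.inr trivial
    have : ((β - ℏ * lam) * φ x + g * φ x ^ 3) / C * φ x + ψ x * ψ x = h x := by
      simp only [hhdef]; field_simp
    rw [this] at h1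
    exact h1.hasDerivWithinAt
  have hFTC : ∫ x in a..b, h x = 0 := by
    rw [integral_eq_sub_of_hasDeriv_right_of_le hab.le hHc hHder hhi, ha0, hb0]
    ring
  -- integrability of pieces
  have hφ2i : IntervalIntegrable (fun x => (φ x) ^ 2) volume a b := by
    apply ContinuousOn.intervalIntegrable; rw [uIcc_of_le hab.le]; exact hsolc.pow 2
  have hφ4i : IntervalIntegrable (fun x => (φ x) ^ 4) volume a b := by
    apply ContinuousOn.intervalIntegrable; rw [uIcc_of_le hab.le]; exact hsolc.pow 4
  have hψ2i : IntervalIntegrable (fun x => (ψ x) ^ 2) volume a b := by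
    apply ContinuousOn.intervalIntegrable; rw [uIcc_of_le hab.le]; exact hψc.pow 2
  set I2 : ℝ := ∫ x in a..b, (φ x) ^ 2 with hI2
  set I4 : ℝ := ∫ x in a..b, (φ x) ^ 4 with hI4
  set E : ℝ := ∫ x in a..b, (ψ x) ^ 2 with hE
  have hsplit : ((β - ℏ * lam) * I2 + g * I4) / C + E = 0 := by
    rw [← hFTC]
    simp only [hhdef, hI2, hI4, hE]
    rw [integral_add (((hφ2i.const_mul _).add (hφ4i.const_mul _)).div_const C) hψ2i,
      intervalIntegral.integral_div, integral_add (hφ2i.const_mul _) (hφ4i.const_mul _),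
      intervalIntegral.integral_const_mul, intervalIntegral.integral_const_mul]
  -- positivity of I2 and I4
  obtain ⟨x₀, hx₀m, hx₀⟩ := hne
  have hx₀o : x₀ ∈ Ioo a b := by
    rcases eq_or_lt_of_le hx₀m.1 with h1 | h1
    · exact absurd (h1 ▸ ha0) hx₀
    rcases eq_or_lt_of_le hx₀m.2 with h2 | h2
    · exact absurd (h2 ▸ hb0) hx₀
    exact ⟨h1, h2⟩
  have hcx₀ : ContinuousAt φ x₀ :=
    (hsolc.continuousWithinAt hx₀m).continuousAt (Icc_mem_nhds hx₀o.1 hx₀o.2)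
  have hnbhd : {y | φ y ≠ 0} ∩ Ioo a b ∈ 𝓝 x₀ := by
    apply Filter.inter_mem _ (isOpen_Ioo.mem_nhds hx₀o)
    exact hcx₀ (isOpen_ne.mem_nhds hx₀)
  obtain ⟨u, v, huv, hsubuv⟩ := mem_nhds_iff_exists_Ioo_subset.mp hnbhd
  have huvlt : u < v := lt_trans huv.1 huv.2
  set u' : ℝ := max u a with hu'
  set v' : ℝ := min v b with hv'
  have hu'x : u' < x₀ := max_lt huv.1 hx₀o.1
  have hxv' : x₀ < v' := lt_min huv.2 hx₀o.2
  have hu'v' : u' < v' := hu'x.trans hxv'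
  have hau' : a ≤ u' := le_max_right _ _
  have hv'b : v' ≤ b := min_le_right _ _
  have hsub' : Ioo u' v' ⊆ {y | φ y ≠ 0} := fun y hy =>
    (hsubuv ⟨(le_max_left u a).trans_lt hy.1, hy.2.trans_le (min_le_left v b)⟩).1
  have hmono2 : ∀ (n : ℕ), IntervalIntegrable (fun x => (φ x) ^ n) volume u' v' := by
    intro n
    apply ContinuousOn.intervalIntegrable
    apply (hsolc.pow n).mono
    rw [uIcc_of_le hu'v'.le]
    exact Icc_subset_Icc hau' hv'b
  have hnn2 : (0:ℝ→ℝ) ≤ᵐ[volume.restrict (Ioc a b)] fun x => (φ x) ^ 2 :=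
    Filter.Eventually.of_forall fun x => sq_nonneg _
  have hnn4 : (0:ℝ→ℝ) ≤ᵐ[volume.restrict (Ioc a b)] fun x => (φ x) ^ 4 :=
    Filter.Eventually.of_forall fun x => by positivity
  have hI2pos : 0 < I2 := by
    have hmid : 0 < ∫ x in u'..v', (φ x) ^ 2 := by
      apply intervalIntegral_pos_of_pos_on (hmono2 2) _ hu'v'
      intro x hx
      have hnex : φ x ≠ 0 := hsub' hx
      positivity
    have hle : (∫ x in u'..v', (φ x) ^ 2) ≤ I2 :=
      integral_mono_interval hau' hu'v'.le hv'b hnn2 hφ2i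
    linarith
  have hI4pos : 0 < I4 := by
    have hmid : 0 < ∫ x in u'..v', (φ x) ^ 4 := by
      apply intervalIntegral_pos_of_pos_on (hmono2 4) _ hu'v'
      intro x hx
      have hnex : φ x ≠ 0 := hsub' hx
      positivity
    have hle : (∫ x in u'..v', (φ x) ^ 4) ≤ I4 :=
      integral_mono_interval hau' hu'v'.le hv'b hnn4 hφ4i
    linarith
  -- Wirtinger inequality
  have hWirt : (Real.pi / (b - a)) ^ 2 * I2 ≤ E :=
    wirtinger hab hsolc hψc hd (hdW a (left_mem_Icc.mpr hab.le))
      (hdW b (right_mem_Icc.mpr hab.le)) ha0 hb0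
  -- final algebra
  have h1 : (β - ℏ * lam) * I2 + g * I4 + C * E = 0 := by
    have hC0 : C ≠ 0 := ne_of_gt hC
    field_simp at hsplit
    linarith
  have h2 : C * ((Real.pi / (b - a)) ^ 2 * I2) ≤ C * E :=
    mul_le_mul_of_nonneg_left hWirt hC.le
  have h4 : 0 < (ℏ * lam - β - C * (Real.pi / (b - a)) ^ 2) * I2 := by
    have hg4 : 0 < g * I4 := mul_pos hg hI4pos
    nlinarith [h1, h2]
  nlinarith [h4, hI2pos]

/-- a nonzero stationary state on `[a,b]` in the repulsive case forces
`ℏλ - β > (ℏ²/(4m))·(π/(b-a))²`; no nonzero solution on arbitrarily short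
intervals for bounded `β`. -/
theorem stmt_5 (ℏ m lam g : ℝ) (hℏ : 0 < ℏ) (hm : 0 < m) (hg : 0 < g)
    (a b β : ℝ) (hab : a < b) (φ : ℝ → ℝ)
    (hsol : IsGPSolution ℏ m lam g a b β φ)
    (hC1 : ContDiffOn ℝ 1 φ (Set.Icc a b))
    (hne : ∃ x ∈ Set.Icc a b, φ x ≠ 0) :
    ℏ * lam - β > ℏ ^ 2 / (4 * m) * (Real.pi / (b - a)) ^ 2 := by
  obtain ⟨hc, h2, hode, ha0, hb0⟩ := hsol
  exact stmt_5' ℏ m lam g hℏ hm hg a b β hab φ hc h2 hode ha0 hb0 hC1 hne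
end

section
/- Let g > 0 and suppose β ≥ β_1 = ℏλ − (ℏ²/(4m))·(π/L)². Then the only GP solution on [0,L] with parameter β that is continuously differentiable on [0,L] is the identically zero function. (No nontrivial quantum states exist before the first quantum critical point in the repulsive case; bifurcation occurs only to the left of β_1.) -/
open Set MeasureTheory intervalIntegral Filter Topology

/-- Negation of a GP solution is a GP solution. -/
lemma IsGPSolution.neg {ℏ m lam g a b β : ℝ} {φ : ℝ → ℝ}
    (h : IsGPSolution ℏ m lam g a b β φ) :
    IsGPSolution ℏ m lam g a b β (fun x => -φ x) := by
  obtain ⟨hc, hd, hode, h0, h1⟩ := h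
  refine ⟨hc.neg, hd.neg, ?_, by simp [h0], by simp [h1]⟩
  intro x hx
  have hder : (deriv fun x => -φ x) = fun y => -deriv φ y :=
    funext fun y => deriv.neg
  have h2 : deriv (deriv fun x => -φ x) x = -deriv (deriv φ) x := by
    rw [hder]; exact deriv.neg
  have := hode x hx
  rw [h2]; linear_combination -this

set_option maxHeartbeats 1000000 in
/-- Key lemma: a C¹ GP solution with `β ≥ β₁`, `g > 0` cannot be positive anywhere. -/
lemma gp_key_s6 (ℏ m lam L g : ℝ) (hℏ : 0 < ℏ) (hm : 0 < m) (hL : 0 < L)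
    (hg : 0 < g) (β : ℝ) (hβ : betaCrit ℏ m lam L 1 ≤ β)
    (φ : ℝ → ℝ)
    (hsol : IsGPSolution ℏ m lam g 0 L β φ)
    (hC1 : ContDiffOn ℝ 1 φ (Set.Icc 0 L)) :
    ∀ x₀ ∈ Set.Ioo (0:ℝ) L, ¬ 0 < φ x₀ := by
  intro x₀ hx₀ hpos
  obtain ⟨hcont, hC2, hode, hz0, hzL⟩ := hsol
  set c : ℝ := ℏ ^ 2 / (4 * m) with hc
  have hcpos : 0 < c := by positivity
  have hπ : 0 < Real.pi := Real.pi_pos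
  have hμ : -(c * (Real.pi / L) ^ 2) ≤ β - ℏ * lam := by
    unfold betaCrit at hβ
    push_cast at hβ
    rw [one_mul] at hβ
    linarith
  -- the comparison function s(x) = sin(πx/L)
  set s : ℝ → ℝ := fun x => Real.sin (Real.pi * x / L) with hs_def
  set s' : ℝ → ℝ := fun x => Real.pi / L * Real.cos (Real.pi * x / L) with hs'_def
  have hu : ∀ x : ℝ, HasDerivAt (fun y => Real.pi * y / L) (Real.pi / L) x := by
    intro x
    simpa using (((hasDerivAt_id x).const_mul Real.pi).div_const L)
  have hs : ∀ x : ℝ, HasDerivAt s (s' x) x := by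
    intro x
    have := (hu x).sin
    simpa [hs_def, hs'_def, mul_comm] using this
  have hs' : ∀ x : ℝ, HasDerivAt s' (-(Real.pi / L) ^ 2 * s x) x := by
    intro x
    have := ((hu x).cos).const_mul (Real.pi / L)
    convert this using 1
    · rfl
    · rfl
    simp [hs_def]
    ring
  have hs0 : s 0 = 0 := by simp [hs_def]
  have hsL : s L = 0 := by
    simp only [hs_def]
    rw [mul_div_assoc, div_self hL.ne', mul_one, Real.sin_pi]
  have hspos : ∀ x ∈ Set.Ioo (0:ℝ) L, 0 < s x := by
    intro x hx
    apply Real.sin_pos_of_pos_of_lt_pi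
    · exact div_pos (mul_pos hπ hx.1) hL
    · rw [div_lt_iff₀ hL]
      nlinarith [hx.2]
  -- construct the maximal positivity interval (α, γ) around x₀
  set A : Set ℝ := Set.Icc 0 x₀ ∩ φ ⁻¹' {0} with hA_def
  set B : Set ℝ := Set.Icc x₀ L ∩ φ ⁻¹' {0} with hB_def
  have hAsub : A ⊆ Set.Icc 0 x₀ := Set.inter_subset_left
  have hBsub : B ⊆ Set.Icc x₀ L := Set.inter_subset_left
  have hAne : A.Nonempty := ⟨0, ⟨le_rfl, hx₀.1.le⟩, by simpa using hz0⟩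
  have hBne : B.Nonempty := ⟨L, ⟨hx₀.2.le, le_rfl⟩, by simpa using hzL⟩
  have hAcl : IsClosed A :=
    (hcont.mono (Set.Icc_subset_Icc_right hx₀.2.le)).preimage_isClosed_of_isClosed
      isClosed_Icc isClosed_singleton
  have hBcl : IsClosed B :=
    (hcont.mono (Set.Icc_subset_Icc_left hx₀.1.le)).preimage_isClosed_of_isClosed
      isClosed_Icc isClosed_singleton
  set α : ℝ := sSup A with hα_def
  set γ : ℝ := sInf B with hγ_def
  have hαmem : α ∈ A := hAcl.csSup_mem hAne (BddAbove.mono hAsub bddAbove_Icc)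
  have hγmem : γ ∈ B := hBcl.csInf_mem hBne (BddBelow.mono hBsub bddBelow_Icc)
  have hφα : φ α = 0 := hαmem.2
  have hφγ : φ γ = 0 := hγmem.2
  have hα0 : 0 ≤ α := hαmem.1.1
  have hγL : γ ≤ L := hγmem.1.2
  have hαx : α < x₀ := lt_of_le_of_ne hαmem.1.2 (by intro h; rw [h] at hφα; linarith)
  have hxγ : x₀ < γ := lt_of_le_of_ne hγmem.1.1 (by intro h; rw [← h] at hφγ; linarith)
  have hαγ : α < γ := hαx.trans hxγ
  have hsub : Set.Ioo α γ ⊆ Set.Ioo 0 L := fun x hx =>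
    ⟨lt_of_le_of_lt hα0 hx.1, lt_of_lt_of_le hx.2 hγL⟩
  -- φ is positive on (α, γ)
  have hφpos : ∀ x ∈ Set.Ioo α γ, 0 < φ x := by
    intro x hx
    by_contra hle
    push_neg at hle
    have hne : φ x ≠ 0 := by
      intro h0
      rcases le_or_gt x x₀ with hcase | hcase
      · have : x ∈ A := ⟨⟨(hsub hx).1.le, hcase⟩, h0⟩
        exact absurd (le_csSup (BddAbove.mono hAsub bddAbove_Icc) this) (not_le.2 hx.1)
      · have : x ∈ B := ⟨⟨hcase.le, (hsub hx).2.le⟩, h0⟩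
        exact absurd (csInf_le (BddBelow.mono hBsub bddBelow_Icc) this) (not_le.2 hx.2)
    have hlt : φ x < 0 := lt_of_le_of_ne hle hne
    rcases lt_trichotomy x x₀ with hcase | hcase | hcase
    · have hccc : ContinuousOn φ (Set.Icc x x₀) :=
        hcont.mono (Set.Icc_subset_Icc (hsub hx).1.le hx₀.2.le)
      have := intermediate_value_Ioo hcase.le hccc (a := x) (b := x₀)
      obtain ⟨z, hz, hz0⟩ := this ⟨hlt, hpos⟩
      have : z ∈ A := ⟨⟨le_trans (hsub hx).1.le hz.1.le, hz.2.le⟩, hz0⟩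
      have : z ≤ α := le_csSup (BddAbove.mono hAsub bddAbove_Icc) this
      linarith [hx.1, hz.1]
    · rw [hcase] at hlt; linarith
    · have hccc : ContinuousOn φ (Set.Icc x₀ x) :=
        hcont.mono (Set.Icc_subset_Icc hx₀.1.le (hsub hx).2.le)
      have := intermediate_value_Ioo' hcase.le hccc (a := x₀) (b := x)
      obtain ⟨z, hz, hz0⟩ := this ⟨hlt, hpos⟩
      have : z ∈ B := ⟨⟨hz.1.le, le_trans hz.2.le (hsub hx).2.le⟩, hz0⟩
      have : γ ≤ z := csInf_le (BddBelow.mono hBsub bddBelow_Icc) this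
      linarith [hx.2, hz.2]
  -- differentiability facts for φ on (0, L)
  have hdiff : DifferentiableOn ℝ φ (Set.Ioo 0 L) := hC2.differentiableOn (by norm_num)
  have hdiff2 : DifferentiableOn ℝ (deriv φ) (Set.Ioo 0 L) :=
    (hC2.deriv_of_isOpen isOpen_Ioo (by norm_num : (1:WithTop ℕ∞) + 1 ≤ 2)).differentiableOn one_ne_zero
  have hder_at : ∀ x ∈ Set.Ioo (0:ℝ) L, HasDerivAt φ (deriv φ x) x := fun x hx =>
    (hdiff.differentiableAt (isOpen_Ioo.mem_nhds hx)).hasDerivAt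
  have hder2_at : ∀ x ∈ Set.Ioo (0:ℝ) L, HasDerivAt (deriv φ) (deriv (deriv φ) x) x :=
    fun x hx => (hdiff2.differentiableAt (isOpen_Ioo.mem_nhds hx)).hasDerivAt
  -- the Wronskian-like function
  set φd : ℝ → ℝ := derivWithin φ (Set.Icc 0 L) with hφd_def
  have hφd_eq : ∀ x ∈ Set.Ioo (0:ℝ) L, φd x = deriv φ x := fun x hx =>
    derivWithin_of_mem_nhds (Icc_mem_nhds hx.1 hx.2)
  set W : ℝ → ℝ := fun x => φd x * s x - φ x * s' x with hW_def
  have hscont : Continuous s := by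
    apply Real.continuous_sin.comp
    exact (continuous_const.mul continuous_id).div_const L
  have hs'cont : Continuous s' := by
    apply Continuous.mul continuous_const
    apply Real.continuous_cos.comp
    exact (continuous_const.mul continuous_id).div_const L
  have hWcont : ContinuousOn W (Set.Icc α γ) := by
    have hφdc : ContinuousOn φd (Set.Icc 0 L) :=
      hC1.continuousOn_derivWithin (uniqueDiffOn_Icc hL) le_rfl
    have hIcc : Set.Icc α γ ⊆ Set.Icc 0 L := Set.Icc_subset_Icc hα0 hγL
    exact ((hφdc.mono hIcc).mul hscont.continuousOn).sub
      ((hcont.mono hIcc).mul hs'cont.continuousOn)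
  -- W has positive derivative on (α, γ)
  have hWderiv : ∀ x ∈ Set.Ioo α γ, 0 < deriv W x := by
    intro x hx
    have hx' : x ∈ Set.Ioo (0:ℝ) L := hsub hx
    have hW_eq : ∀ᶠ y in 𝓝 x, W y = deriv φ y * s y - φ y * s' y := by
      filter_upwards [isOpen_Ioo.mem_nhds hx'] with y hy
      rw [hW_def]
      simp only
      rw [hφd_eq y hy]
    have hd : HasDerivAt (fun y => deriv φ y * s y - φ y * s' y)
        (deriv (deriv φ) x * s x + deriv φ x * s' x -
          (deriv φ x * s' x + φ x * (-(Real.pi / L) ^ 2 * s x))) x :=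
      ((hder2_at x hx').mul (hs x)).sub ((hder_at x hx').mul (hs' x))
    have hWd : HasDerivAt W
        (deriv (deriv φ) x * s x + deriv φ x * s' x -
          (deriv φ x * s' x + φ x * (-(Real.pi / L) ^ 2 * s x))) x :=
      hd.congr_of_eventuallyEq hW_eq
    rw [hWd.deriv]
    have hodex := hode x hx'
    have hφx : 0 < φ x := hφpos x hx
    have hsx : 0 < s x := hspos x hx'
    have key : 0 < deriv (deriv φ) x * s x + (Real.pi / L) ^ 2 * φ x * s x := by
      have h1 : c * deriv (deriv φ) x = (β - ℏ * lam) * φ x + g * φ x ^ 3 := by linarith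
      have h2 : 0 < g * φ x ^ 3 * s x := by positivity
      have h3 : 0 ≤ (β - ℏ * lam + c * (Real.pi / L) ^ 2) * (φ x * s x) := by
        apply mul_nonneg (by linarith) (by positivity)
      nlinarith
    nlinarith
  have hWmono : StrictMonoOn W (Set.Icc α γ) := by
    apply strictMonoOn_of_deriv_pos (convex_Icc α γ) hWcont
    rw [interior_Icc]
    exact hWderiv
  have hWlt : W α < W γ := hWmono (Set.left_mem_Icc.2 hαγ.le) (Set.right_mem_Icc.2 hαγ.le) hαγ
  -- W α ≥ 0
  have hWα : 0 ≤ W α := by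
    rcases eq_or_lt_of_le hα0 with h0 | h0
    · have hW0 : W α = 0 := by
        simp only [hW_def, ← h0, hz0, hs0]; ring
      rw [hW0]
    · have hαIoo : α ∈ Set.Ioo (0:ℝ) L := ⟨h0, hαx.trans hx₀.2⟩
      have hda : HasDerivAt φ (deriv φ α) α := hder_at α hαIoo
      have hslope : Tendsto (slope φ α) (𝓝[>] α) (𝓝 (deriv φ α)) :=
        (hasDerivAt_iff_tendsto_slope.1 hda).mono_left
          (nhdsWithin_mono α fun x hx => ne_of_gt hx)
      have hnonneg : 0 ≤ deriv φ α := by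
        apply ge_of_tendsto hslope
        filter_upwards [Ioo_mem_nhdsGT_of_mem ⟨le_rfl, hαγ⟩] with x hx
        rw [slope_def_field, hφα, sub_zero]
        exact div_nonneg (hφpos x hx).le (by linarith [hx.1])
      show 0 ≤ φd α * s α - φ α * s' α
      rw [hφα, hφd_eq α hαIoo, zero_mul, sub_zero]
      exact mul_nonneg hnonneg (hspos α hαIoo).le
  -- W γ ≤ 0
  have hWγ : W γ ≤ 0 := by
    rcases eq_or_lt_of_le hγL with h0 | h0
    · have hW0 : W γ = 0 := by
        simp only [hW_def, h0, hzL, hsL]; ring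
      rw [hW0]
    · have hγIoo : γ ∈ Set.Ioo (0:ℝ) L := ⟨hx₀.1.trans hxγ, h0⟩
      have hda : HasDerivAt φ (deriv φ γ) γ := hder_at γ hγIoo
      have hslope : Tendsto (slope φ γ) (𝓝[<] γ) (𝓝 (deriv φ γ)) :=
        (hasDerivAt_iff_tendsto_slope.1 hda).mono_left
          (nhdsWithin_mono γ fun x hx => ne_of_lt hx)
      have hnonpos : deriv φ γ ≤ 0 := by
        apply le_of_tendsto hslope
        filter_upwards [Ioo_mem_nhdsLT_of_mem ⟨hαγ, le_rfl⟩] with x hx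
        rw [slope_def_field, hφγ, sub_zero]
        exact div_nonpos_of_nonneg_of_nonpos (hφpos x hx).le (by linarith [hx.2])
      show φd γ * s γ - φ γ * s' γ ≤ 0
      rw [hφγ, hφd_eq γ hγIoo, zero_mul, sub_zero]
      have h := mul_nonneg (neg_nonneg.2 hnonpos) (hspos γ hγIoo).le
      rw [neg_mul] at h
      linarith
  linarith

/-- for `g > 0` and `β ≥ β₁`, the only GP solution on `[0,L]` is the
identically zero function. -/
theorem stmt_6 (ℏ m lam L g : ℝ) (hℏ : 0 < ℏ) (hm : 0 < m) (hL : 0 < L)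
    (hg : 0 < g) (β : ℝ) (hβ : betaCrit ℏ m lam L 1 ≤ β)
    (φ : ℝ → ℝ)
    (hsol : IsGPSolution ℏ m lam g 0 L β φ)
    (hC1 : ContDiffOn ℝ 1 φ (Set.Icc 0 L)) :
    ∀ x ∈ Set.Icc (0:ℝ) L, φ x = 0 := by
  intro x hx
  rcases eq_or_lt_of_le hx.1 with h0 | h0
  · rw [← h0]; exact hsol.2.2.2.1
  rcases eq_or_lt_of_le hx.2 with h1 | h1
  · rw [h1]; exact hsol.2.2.2.2
  have hxIoo : x ∈ Set.Ioo (0:ℝ) L := ⟨h0, h1⟩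
  have hle : ¬ 0 < φ x := gp_key_s6 ℏ m lam L g hℏ hm hL hg β hβ φ hsol hC1 x hxIoo
  have hge : ¬ 0 < -φ x :=
    gp_key_s6 ℏ m lam L g hℏ hm hL hg β hβ (fun y => -φ y) hsol.neg hC1.neg x hxIoo
  push_neg at hle hge
  linarith
end

section
/- Let g, β ∈ ℝ, let a < b, and let φ be a GP solution on [a,b] with parameter β such that φ(x) ≤ 0 for all x ∈ [a,b] and φ is not identically zero on [a,b]. Then φ(x) < 0 for all x ∈ (a,b). (Strong maximum principle step, Case 1, in the proof that two bifurcated branches do not intersect: a nonpositive nontrivial stationary state cannot vanish at an interior point.) -/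
open Set MeasureTheory intervalIntegral Filter Topology

lemma lipsAux (c₁ c₂ R : ℝ) (hR : 0 ≤ R) :
    LipschitzOnWith (Real.toNNReal (max 1 (|c₁| + 3 * |c₂| * R ^ 2)))
      (fun p : ℝ × ℝ => ((p.2, c₁ * p.1 + c₂ * p.1 ^ 3) : ℝ × ℝ)) (Metric.closedBall 0 R) := by
  rw [lipschitzOnWith_iff_dist_le_mul]
  intro p hp q hq
  have hKc : (Real.toNNReal (max 1 (|c₁| + 3 * |c₂| * R ^ 2)) : ℝ)
      = max 1 (|c₁| + 3 * |c₂| * R ^ 2) :=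
    Real.coe_toNNReal _ (le_trans zero_le_one (le_max_left _ _))
  rw [hKc]
  have hp1 : |p.1| ≤ R := by
    simpa [Real.norm_eq_abs] using (norm_fst_le p).trans (mem_closedBall_zero_iff.mp hp)
  have hq1 : |q.1| ≤ R := by
    simpa [Real.norm_eq_abs] using (norm_fst_le q).trans (mem_closedBall_zero_iff.mp hq)
  have hdf : dist p.1 q.1 ≤ dist p q := by rw [Prod.dist_eq]; exact le_max_left _ _
  have hds : dist p.2 q.2 ≤ dist p q := by rw [Prod.dist_eq]; exact le_max_right _ _
  have h3 : |p.1 ^ 2 + p.1 * q.1 + q.1 ^ 2| ≤ 3 * R ^ 2 := by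
    calc |p.1 ^ 2 + p.1 * q.1 + q.1 ^ 2|
        ≤ |p.1 ^ 2| + |p.1 * q.1| + |q.1 ^ 2| := abs_add_three _ _ _
      _ = |p.1| ^ 2 + |p.1| * |q.1| + |q.1| ^ 2 := by rw [abs_pow, abs_pow, abs_mul]
      _ ≤ R ^ 2 + R * R + R ^ 2 := by gcongr <;> positivity
      _ = 3 * R ^ 2 := by ring
  rw [Prod.dist_eq]
  apply max_le
  · show dist p.2 q.2 ≤ _
    exact hds.trans (le_mul_of_one_le_left dist_nonneg (le_max_left _ _))
  · show dist (c₁ * p.1 + c₂ * p.1 ^ 3) (c₁ * q.1 + c₂ * q.1 ^ 3) ≤ _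
    have hfst : |p.1 - q.1| ≤ dist p q := by rw [← Real.dist_eq]; exact hdf
    have key : |c₁ * p.1 + c₂ * p.1 ^ 3 - (c₁ * q.1 + c₂ * q.1 ^ 3)|
        ≤ (|c₁| + 3 * |c₂| * R ^ 2) * |p.1 - q.1| := by
      have e : c₁ * p.1 + c₂ * p.1 ^ 3 - (c₁ * q.1 + c₂ * q.1 ^ 3)
          = c₁ * (p.1 - q.1) + (c₂ * (p.1 ^ 2 + p.1 * q.1 + q.1 ^ 2)) * (p.1 - q.1) := by ring
      rw [e]
      calc |c₁ * (p.1 - q.1) + (c₂ * (p.1 ^ 2 + p.1 * q.1 + q.1 ^ 2)) * (p.1 - q.1)|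
          ≤ |c₁ * (p.1 - q.1)| + |(c₂ * (p.1 ^ 2 + p.1 * q.1 + q.1 ^ 2)) * (p.1 - q.1)| :=
            abs_add_le _ _
        _ = |c₁| * |p.1 - q.1| + |c₂| * |p.1 ^ 2 + p.1 * q.1 + q.1 ^ 2| * |p.1 - q.1| := by
            rw [abs_mul, abs_mul, abs_mul]
        _ ≤ |c₁| * |p.1 - q.1| + |c₂| * (3 * R ^ 2) * |p.1 - q.1| := by gcongr
        _ = (|c₁| + 3 * |c₂| * R ^ 2) * |p.1 - q.1| := by ring
    calc dist (c₁ * p.1 + c₂ * p.1 ^ 3) (c₁ * q.1 + c₂ * q.1 ^ 3)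
        = |c₁ * p.1 + c₂ * p.1 ^ 3 - (c₁ * q.1 + c₂ * q.1 ^ 3)| := Real.dist_eq _ _
      _ ≤ (|c₁| + 3 * |c₂| * R ^ 2) * |p.1 - q.1| := key
      _ ≤ (|c₁| + 3 * |c₂| * R ^ 2) * dist p q := by gcongr
      _ ≤ max 1 (|c₁| + 3 * |c₂| * R ^ 2) * dist p q := by
          gcongr ?_ * _; exact le_max_right _ _

/-- strong maximum principle step (Case 1): a nonpositive nontrivial
stationary state cannot vanish at an interior point. -/
theorem stmt_8 (ℏ m lam g : ℝ) (hℏ : 0 < ℏ) (hm : 0 < m)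
    (a b β : ℝ) (hab : a < b) (φ : ℝ → ℝ)
    (hsol : IsGPSolution ℏ m lam g a b β φ)
    (hnonpos : ∀ x ∈ Set.Icc a b, φ x ≤ 0)
    (hne : ∃ x ∈ Set.Icc a b, φ x ≠ 0) :
    ∀ x ∈ Set.Ioo a b, φ x < 0 := by
  obtain ⟨hcont, hC2, hode, hA, hB⟩ := hsol
  have hpos : (0:ℝ) < ℏ ^ 2 / (4 * m) := by positivity
  set c₁ : ℝ := (β - ℏ * lam) / (ℏ ^ 2 / (4 * m)) with hc1
  set c₂ : ℝ := g / (ℏ ^ 2 / (4 * m)) with hc2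
  have hopen : IsOpen (Set.Ioo a b) := isOpen_Ioo
  have hd1 : ∀ x ∈ Set.Ioo a b, HasDerivAt φ (deriv φ x) x := fun x hx =>
    ((hC2.differentiableOn (by norm_num)).differentiableAt (hopen.mem_nhds hx)).hasDerivAt
  have hC1' : ContDiffOn ℝ 1 (deriv φ) (Set.Ioo a b) := by
    have := hC2.deriv_of_isOpen (m := 1) hopen (by norm_num)
    exact this.of_le (by norm_num)
  have hd2 : ∀ x ∈ Set.Ioo a b, HasDerivAt (deriv φ) (deriv (deriv φ) x) x := fun x hx =>
    ((hC1'.differentiableOn one_ne_zero).differentiableAt (hopen.mem_nhds hx)).hasDerivAt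
  have hODE : ∀ x ∈ Set.Ioo a b, deriv (deriv φ) x = c₁ * φ x + c₂ * φ x ^ 3 := by
    intro x hx
    have h := hode x hx
    rw [hc1, hc2]
    have h4 : (4:ℝ) * m ≠ 0 := by positivity
    field_simp at h ⊢
    linarith
  by_contra hcon
  push_neg at hcon
  obtain ⟨x₀, hx₀, hx₀'⟩ := hcon
  have hφ0 : φ x₀ = 0 := le_antisymm (hnonpos x₀ (Ioo_subset_Icc_self hx₀)) hx₀'
  have hd0 : deriv φ x₀ = 0 := by
    have hmax : IsLocalMax φ x₀ := by
      filter_upwards [hopen.mem_nhds hx₀] with y hy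
      rw [hφ0]
      exact hnonpos y (Ioo_subset_Icc_self hy)
    exact hmax.deriv_eq_zero
  have key : ∀ y ∈ Set.Ioo a b, φ y = 0 := by
    intro y hy
    set u := min x₀ y with hu
    set w := max x₀ y with hw
    have hau : a < u := lt_min hx₀.1 hy.1
    have hwb : w < b := max_lt hx₀.2 hy.2
    set a' := (a + u) / 2 with ha'
    set b' := (w + b) / 2 with hb'
    have ha'u : a' < u := by rw [ha']; linarith
    have haa' : a < a' := by rw [ha']; linarith
    have hwb' : w < b' := by rw [hb']; linarith
    have hb'b : b' < b := by rw [hb']; linarith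
    have huw : u ≤ w := min_le_max
    have hsub : Set.Icc a' b' ⊆ Set.Ioo a b := fun t ht =>
      ⟨lt_of_lt_of_le haa' ht.1, lt_of_le_of_lt ht.2 hb'b⟩
    have hsub' : Set.Ioo a' b' ⊆ Set.Ioo a b := fun t ht => hsub (Ioo_subset_Icc_self ht)
    have hFc : ContinuousOn (fun t => ((φ t, deriv φ t) : ℝ × ℝ)) (Set.Icc a' b') :=
      ((hC2.continuousOn.mono hsub).prodMk (hC1'.continuousOn.mono hsub))
    obtain ⟨R, hR⟩ := (isCompact_Icc).exists_bound_of_continuousOn hFc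
    have hx₀' : x₀ ∈ Set.Ioo a' b' := ⟨lt_of_lt_of_le ha'u (min_le_left _ _),
      lt_of_le_of_lt (le_max_left _ _) hwb'⟩
    have hy' : y ∈ Set.Ioo a' b' := ⟨lt_of_lt_of_le ha'u (min_le_right _ _),
      lt_of_le_of_lt (le_max_right _ _) hwb'⟩
    have hR0 : 0 ≤ R := le_trans (norm_nonneg _) (hR x₀ (Ioo_subset_Icc_self hx₀'))
    have main : EqOn (fun t => ((φ t, deriv φ t) : ℝ × ℝ))
        (fun _ => ((0 : ℝ), (0 : ℝ))) (Set.Ioo a' b') := by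
      apply ODE_solution_unique_of_mem_Ioo
        (v := fun _ p => ((p.2, c₁ * p.1 + c₂ * p.1 ^ 3) : ℝ × ℝ))
        (s := fun _ => Metric.closedBall (0 : ℝ × ℝ) R)
        (fun _ _ => lipsAux c₁ c₂ R hR0) hx₀'
      · intro t ht
        constructor
        · have h1 := hd1 t (hsub' ht)
          have h2 := hd2 t (hsub' ht)
          have e : (((φ t, deriv φ t) : ℝ × ℝ).2,
              c₁ * ((φ t, deriv φ t) : ℝ × ℝ).1 + c₂ * ((φ t, deriv φ t) : ℝ × ℝ).1 ^ 3)
              = ((deriv φ t, deriv (deriv φ) t) : ℝ × ℝ) := by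
            simp [hODE t (hsub' ht)]
          rw [e]
          exact h1.prodMk h2
        · exact mem_closedBall_zero_iff.mpr (hR t (Ioo_subset_Icc_self ht))
      · intro t ht
        refine ⟨?_, ?_⟩
        · have e0 : ((((0:ℝ), (0:ℝ)) : ℝ × ℝ).2,
              c₁ * (((0:ℝ), (0:ℝ)) : ℝ × ℝ).1 + c₂ * (((0:ℝ), (0:ℝ)) : ℝ × ℝ).1 ^ 3)
              = (((0:ℝ), (0:ℝ)) : ℝ × ℝ) := by norm_num
          rw [e0]
          exact hasDerivAt_const t _
        · show (((0:ℝ), (0:ℝ)) : ℝ × ℝ) ∈ Metric.closedBall (0 : ℝ × ℝ) R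
          exact Metric.mem_closedBall_self hR0
      · exact Prod.ext hφ0 hd0
    have := main hy'
    exact (Prod.ext_iff.mp this).1
  obtain ⟨x, hx, hxne⟩ := hne
  rcases eq_or_lt_of_le hx.1 with h | h
  · exact hxne (h ▸ hA)
  rcases eq_or_lt_of_le hx.2 with h' | h'
  · exact hxne (h' ▸ hB)
  exact hxne (key x ⟨h, h'⟩)
end

section
/- Let g, β ∈ ℝ and let φ be a GP solution on [0,L] with parameter β. If there exists a nonempty open subinterval (c,d) ⊆ (0,L) with φ(x) = 0 for all x ∈ (c,d), then φ(x) = 0 for all x ∈ [0,L]. (Case 2 in the proof that two bifurcated branches do not intersect: a nontrivial stationary state cannot vanish on a set of positive length.) -/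
open Set MeasureTheory intervalIntegral Filter Topology

lemma gpLip (A B : ℝ) : LipschitzOnWith ⟨1 + |A| + 3 * |B|, by positivity⟩
    (fun p : ℝ × ℝ => (p.2, A * p.1 + B * p.1 ^ 3)) (Metric.closedBall 0 1) := by
  refine LipschitzOnWith.of_dist_le_mul ?_
  intro p hp q hq
  have hp1 : |p.1| ≤ 1 := by
    have := mem_closedBall_zero_iff.mp hp
    exact le_trans (norm_fst_le p) this
  have hq1 : |q.1| ≤ 1 := by
    have := mem_closedBall_zero_iff.mp hq
    exact le_trans (norm_fst_le q) this
  have hd1 : dist p.1 q.1 ≤ dist p q := by rw [Prod.dist_eq]; exact le_max_left _ _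
  have hd2 : dist p.2 q.2 ≤ dist p q := by rw [Prod.dist_eq]; exact le_max_right _ _
  have h3 : |p.1 ^ 3 - q.1 ^ 3| ≤ 3 * |p.1 - q.1| := by
    have he : p.1 ^ 3 - q.1 ^ 3 = (p.1 - q.1) * (p.1 ^ 2 + p.1 * q.1 + q.1 ^ 2) := by ring
    rw [he, abs_mul]
    have hb : |p.1 ^ 2 + p.1 * q.1 + q.1 ^ 2| ≤ 3 := by
      have h1 := abs_le.mp hp1
      have h2 := abs_le.mp hq1
      rw [abs_le]
      constructor <;> nlinarith [sq_nonneg (p.1 + q.1), sq_nonneg (p.1 - q.1)]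
    calc |p.1 - q.1| * |p.1 ^ 2 + p.1 * q.1 + q.1 ^ 2| ≤ |p.1 - q.1| * 3 :=
          mul_le_mul_of_nonneg_left hb (abs_nonneg _)
      _ = 3 * |p.1 - q.1| := by ring
  rw [Prod.dist_eq]
  simp only [NNReal.coe_mk]
  show max _ _ ≤ (1 + |A| + 3 * |B|) * dist p q
  apply max_le
  · nlinarith [dist_nonneg (x := p) (y := q), abs_nonneg A, abs_nonneg B]
  · rw [Real.dist_eq]
    have : A * p.1 + B * p.1 ^ 3 - (A * q.1 + B * q.1 ^ 3)
        = A * (p.1 - q.1) + B * (p.1 ^ 3 - q.1 ^ 3) := by ring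
    rw [this]
    calc |A * (p.1 - q.1) + B * (p.1 ^ 3 - q.1 ^ 3)|
        ≤ |A * (p.1 - q.1)| + |B * (p.1 ^ 3 - q.1 ^ 3)| := abs_add_le _ _
      _ = |A| * |p.1 - q.1| + |B| * |p.1 ^ 3 - q.1 ^ 3| := by rw [abs_mul, abs_mul]
      _ ≤ |A| * dist p q + |B| * (3 * dist p q) := by
          have h4 : |p.1 - q.1| ≤ dist p q := by rwa [Real.dist_eq] at hd1
          have h5 : |p.1 ^ 3 - q.1 ^ 3| ≤ 3 * dist p q := le_trans h3 (by linarith)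
          gcongr <;> positivity
      _ ≤ (1 + |A| + 3 * |B|) * dist p q := by nlinarith [dist_nonneg (x := p) (y := q)]

lemma gpLocalZero (A B : ℝ) (φ : ℝ → ℝ) (s : Set ℝ) (hs : IsOpen s)
    (hφ : ContDiffOn ℝ 2 φ s)
    (hode : ∀ x ∈ s, deriv (deriv φ) x = A * φ x + B * (φ x) ^ 3)
    (x₀ : ℝ) (hx : x₀ ∈ s) (h0 : φ x₀ = 0) (h0' : deriv φ x₀ = 0) :
    ∀ᶠ t in 𝓝 x₀, φ t = 0 := by
  set v : ℝ → ℝ × ℝ → ℝ × ℝ := fun _ p => (p.2, A * p.1 + B * p.1 ^ 3) with hv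
  set F : ℝ → ℝ × ℝ := fun t => (φ t, deriv φ t) with hF
  have hφ1 : DifferentiableOn ℝ φ s := hφ.differentiableOn two_ne_zero
  have hφ' : ContDiffOn ℝ 1 (deriv φ) s := hφ.deriv_of_isOpen hs (by norm_num)
  have hFd : ∀ t ∈ s, HasDerivAt F (v t (F t)) t := by
    intro t ht
    have h1 : HasDerivAt φ (deriv φ t) t :=
      (hφ1.differentiableAt (hs.mem_nhds ht)).hasDerivAt
    have h2 : HasDerivAt (deriv φ) (deriv (deriv φ) t) t :=
      ((hφ'.differentiableOn one_ne_zero).differentiableAt (hs.mem_nhds ht)).hasDerivAt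
    have := h1.prodMk h2
    simpa [hv, hF, hode t ht] using this
  have hF0 : F x₀ = 0 := by simp [hF, h0, h0']
  have hFc : ContinuousAt F x₀ := (hFd x₀ hx).continuousAt
  have hball : Metric.closedBall (0 : ℝ × ℝ) 1 ∈ 𝓝 (F x₀) := by
    rw [hF0]; exact Metric.closedBall_mem_nhds 0 one_pos
  have hf : ∀ᶠ t in 𝓝 x₀, HasDerivAt F (v t (F t)) t ∧ F t ∈ Metric.closedBall (0 : ℝ × ℝ) 1 := by
    filter_upwards [hs.eventually_mem hx, hFc.eventually_mem hball] with t ht hmem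
    exact ⟨hFd t ht, hmem⟩
  have hg : ∀ᶠ t in 𝓝 x₀, HasDerivAt (fun _ : ℝ => (0 : ℝ × ℝ)) (v t 0) t ∧
      (0 : ℝ × ℝ) ∈ Metric.closedBall (0 : ℝ × ℝ) 1 := by
    filter_upwards with t
    constructor
    · have : v t 0 = 0 := by simp [hv]
      rw [this]; exact hasDerivAt_const t 0
    · simp
  have huniq := ODE_solution_unique_of_eventually (Filter.Eventually.of_forall fun _ => gpLip A B) hf hg (by simp [hF0])
  filter_upwards [huniq] with t ht
  have := congrArg Prod.fst ht
  simpa [hF] using this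


/-- Case 2: a stationary state that vanishes on a nonempty open
subinterval of `(0,L)` vanishes identically on `[0,L]`. -/
theorem stmt_9 (ℏ m lam L g : ℝ) (hℏ : 0 < ℏ) (hm : 0 < m) (hL : 0 < L)
    (β : ℝ) (φ : ℝ → ℝ)
    (hsol : IsGPSolution ℏ m lam g 0 L β φ)
    (c d : ℝ) (hcd : c < d) (hsub : Set.Ioo c d ⊆ Set.Ioo (0:ℝ) L)
    (hvanish : ∀ x ∈ Set.Ioo c d, φ x = 0) :
    ∀ x ∈ Set.Icc (0:ℝ) L, φ x = 0 := by
  obtain ⟨hcont, hsm, hode, hz0, hzL⟩ := hsol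
  set A : ℝ := 4 * m / ℏ ^ 2 * (β - ℏ * lam) with hA
  set B : ℝ := 4 * m / ℏ ^ 2 * g with hB
  have hode' : ∀ x ∈ Set.Ioo (0:ℝ) L, deriv (deriv φ) x = A * φ x + B * (φ x) ^ 3 := by
    intro x hx
    have h := hode x hx
    have hne : ℏ ≠ 0 := ne_of_gt hℏ
    have hmne : m ≠ 0 := ne_of_gt hm
    have hh : ℏ ^ 2 / (4 * m) * deriv (deriv φ) x = (β - ℏ * lam) * φ x + g * φ x ^ 3 := by
      linarith
    rw [hA, hB]
    field_simp at hh ⊢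
    linarith
  set U : Set ℝ := {x | ∀ᶠ y in 𝓝 x, φ y = 0} with hU
  have hUopen : IsOpen U := isOpen_setOf_eventually_nhds
  have hmid : (c + d) / 2 ∈ Set.Ioo c d := ⟨by linarith, by linarith⟩
  have hmidU : (c + d) / 2 ∈ U := by
    filter_upwards [isOpen_Ioo.eventually_mem hmid] with y hy
    exact hvanish y hy
  have hkey : Set.Ioo (0:ℝ) L ⊆ U := by
    apply isPreconnected_Ioo.subset_of_closure_inter_subset hUopen
      ⟨(c + d) / 2, hsub hmid, hmidU⟩
    rintro x ⟨hxcl, hxI⟩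
    -- φ x = 0 and deriv φ x = 0 by continuity
    have hφc : ContinuousAt φ x :=
      ((hsm.differentiableOn two_ne_zero).differentiableAt (isOpen_Ioo.mem_nhds hxI)).continuousAt
    have hdc : ContinuousAt (deriv φ) x := by
      have h1 : ContDiffOn ℝ 1 (deriv φ) (Set.Ioo 0 L) :=
        hsm.deriv_of_isOpen isOpen_Ioo (by norm_num)
      exact h1.continuousOn.continuousAt (isOpen_Ioo.mem_nhds hxI)
    obtain ⟨u, hu, hulim⟩ := mem_closure_iff_seq_limit.mp hxcl
    have huz : ∀ n, φ (u n) = 0 := fun n => (hu n).self_of_nhds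
    have hudz : ∀ n, deriv φ (u n) = 0 := by
      intro n
      have : φ =ᶠ[𝓝 (u n)] (fun _ => (0:ℝ)) := hu n
      rw [this.deriv_eq, deriv_const]
    have hφx : φ x = 0 := by
      have t1 : Tendsto (fun n => φ (u n)) atTop (𝓝 (φ x)) := hφc.tendsto.comp hulim
      have t2 : Tendsto (fun n => φ (u n)) atTop (𝓝 0) := by
        simp only [huz]; exact tendsto_const_nhds
      exact tendsto_nhds_unique t1 t2
    have hdx : deriv φ x = 0 := by
      have t1 : Tendsto (fun n => deriv φ (u n)) atTop (𝓝 (deriv φ x)) := hdc.tendsto.comp hulim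
      have t2 : Tendsto (fun n => deriv φ (u n)) atTop (𝓝 0) := by
        simp only [hudz]; exact tendsto_const_nhds
      exact tendsto_nhds_unique t1 t2
    exact gpLocalZero A B φ (Set.Ioo 0 L) isOpen_Ioo hsm hode' x hxI hφx hdx
  intro x hx
  rcases eq_or_lt_of_le hx.1 with h0 | h0
  · rw [← h0]; exact hz0
  rcases eq_or_lt_of_le hx.2 with hL' | hL'
  · rw [hL']; exact hzL
  exact (hkey ⟨h0, hL'⟩).self_of_nhds
end

section
/- Let g > 0, let β ∈ ℝ, and let φ be a GP solution on [0,L] with parameter β that is continuously differentiable on [0,L]. Then g·∫₀^L φ(x)⁴ dx ≤ (ℏλ − β)·∫₀^L φ(x)² dx and (ℏ²/(4m))·∫₀^L φ'(x)² dx ≤ (ℏλ − β)·∫₀^L φ(x)² dx; consequently ∫₀^L φ(x)⁴ dx ≤ L·(max(ℏλ − β, 0))²/g². In particular, for β ranging in any bounded set the solutions stay bounded in L⁴, so there is no value β₀ at which the bifurcated solutions blow up. (A priori bound used in the proof of Theorem 4.2(2).) -/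
open Set MeasureTheory intervalIntegral Filter Topology

/-- a priori bounds for GP solutions in the repulsive case, used in
the proof of Theorem 4.2(2): no blow-up of bifurcated solutions at finite `β₀`. -/
theorem stmt_10 (ℏ m lam L g : ℝ) (hℏ : 0 < ℏ) (hm : 0 < m) (hL : 0 < L)
    (hg : 0 < g) (β : ℝ) (φ : ℝ → ℝ)
    (hsol : IsGPSolution ℏ m lam g 0 L β φ)
    (hC1 : ContDiffOn ℝ 1 φ (Set.Icc 0 L)) :
    g * (∫ x in (0:ℝ)..L, (φ x) ^ 4) ≤ (ℏ * lam - β) * ∫ x in (0:ℝ)..L, (φ x) ^ 2 ∧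
    ℏ ^ 2 / (4 * m) * (∫ x in (0:ℝ)..L, (deriv φ x) ^ 2) ≤
      (ℏ * lam - β) * ∫ x in (0:ℝ)..L, (φ x) ^ 2 ∧
    (∫ x in (0:ℝ)..L, (φ x) ^ 4) ≤ L * (max (ℏ * lam - β) 0) ^ 2 / g ^ 2 := by
  obtain ⟨hcont, hC2, hode, h0, hLv⟩ := hsol
  have hL0 : (0:ℝ) ≤ L := hL.le
  set c : ℝ := ℏ ^ 2 / (4 * m) with hcdef
  have hc : 0 < c := by positivity
  have huIcc : Set.uIcc (0:ℝ) L = Set.Icc 0 L := Set.uIcc_of_le hL0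
  have huniq : UniqueDiffOn ℝ (Set.Icc (0:ℝ) L) := uniqueDiffOn_Icc hL
  set ψ : ℝ → ℝ := derivWithin φ (Set.Icc 0 L) with hψdef
  have hψcont : ContinuousOn ψ (Set.Icc 0 L) :=
    hC1.continuousOn_derivWithin huniq le_rfl
  have hψderiv : ∀ x ∈ Set.Ioo (0:ℝ) L, HasDerivAt φ (ψ x) x := by
    intro x hx
    have hd : DifferentiableWithinAt ℝ φ (Set.Icc 0 L) x :=
      hC1.differentiableOn one_ne_zero x (Set.Ioo_subset_Icc_self hx)
    exact hd.hasDerivWithinAt.hasDerivAt (Icc_mem_nhds hx.1 hx.2)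
  have hψeq : ∀ x ∈ Set.Ioo (0:ℝ) L, deriv φ x = ψ x :=
    fun x hx => (hψderiv x hx).deriv
  have hderiv1 : ContDiffOn ℝ 1 (deriv φ) (Set.Ioo 0 L) :=
    hC2.deriv_of_isOpen isOpen_Ioo (by norm_num)
  have hφ'' : ∀ x ∈ Set.Ioo (0:ℝ) L, HasDerivAt (deriv φ) (deriv (deriv φ) x) x := by
    intro x hx
    exact ((hderiv1.differentiableOn one_ne_zero x hx).differentiableAt
      (isOpen_Ioo.mem_nhds hx)).hasDerivAt
  have hψ'' : ∀ x ∈ Set.Ioo (0:ℝ) L, HasDerivAt ψ (deriv (deriv φ) x) x := by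
    intro x hx
    refine (hφ'' x hx).congr_of_eventuallyEq ?_
    filter_upwards [isOpen_Ioo.mem_nhds hx] with y hy
    exact (hψeq y hy).symm
  -- the combined derivative function
  set f' : ℝ → ℝ := fun x => ψ x ^ 2 + ((β - ℏ * lam) * φ x ^ 2 + g * φ x ^ 4) / c with hf'def
  have hF : ∀ x ∈ Set.Ioo (0:ℝ) L, HasDerivAt (fun y => φ y * ψ y) (f' x) x := by
    intro x hx
    have h : HasDerivAt (fun y => φ y * ψ y) (ψ x * ψ x + φ x * deriv (deriv φ) x) x :=
      (hψderiv x hx).mul (hψ'' x hx)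
    have hode' := hode x hx
    have hD : φ x * deriv (deriv φ) x = ((β - ℏ * lam) * φ x ^ 2 + g * φ x ^ 4) / c := by
      rw [eq_div_iff hc.ne']
      linear_combination (-(φ x)) * hode'
    convert h using 1
    simp only [hf'def]
    rw [hD]
    ring
  have hintφ2 : IntervalIntegrable (fun x => φ x ^ 2) volume 0 L := by
    apply ContinuousOn.intervalIntegrable; rw [huIcc]; exact hcont.pow 2
  have hintφ4 : IntervalIntegrable (fun x => φ x ^ 4) volume 0 L := by
    apply ContinuousOn.intervalIntegrable; rw [huIcc]; exact hcont.pow 4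
  have hintψ2 : IntervalIntegrable (fun x => ψ x ^ 2) volume 0 L := by
    apply ContinuousOn.intervalIntegrable; rw [huIcc]; exact hψcont.pow 2
  have hintrest : IntervalIntegrable
      (fun x => ((β - ℏ * lam) * φ x ^ 2 + g * φ x ^ 4) / c) volume 0 L := by
    apply ContinuousOn.intervalIntegrable
    rw [huIcc]
    exact (((continuousOn_const.mul (hcont.pow 2)).add
      (continuousOn_const.mul (hcont.pow 4))).div_const c)
  have hintf' : IntervalIntegrable f' volume 0 L := hintψ2.add hintrest
  have hFTC : (∫ x in (0:ℝ)..L, f' x) = φ L * ψ L - φ 0 * ψ 0 := by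
    exact intervalIntegral.integral_eq_sub_of_hasDerivAt_of_le hL0
      (hcont.mul hψcont) hF hintf'
  set I2 : ℝ := ∫ x in (0:ℝ)..L, φ x ^ 2 with hI2
  set I4 : ℝ := ∫ x in (0:ℝ)..L, φ x ^ 4 with hI4
  set Iψ : ℝ := ∫ x in (0:ℝ)..L, ψ x ^ 2 with hIψ
  have hsplit : (∫ x in (0:ℝ)..L, f' x) = Iψ + ((β - ℏ * lam) * I2 + g * I4) / c := by
    rw [hf'def, intervalIntegral.integral_add hintψ2 hintrest]
    congr 1
    rw [intervalIntegral.integral_div]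
    congr 1
    rw [intervalIntegral.integral_add ((hintφ2.const_mul _)) ((hintφ4.const_mul _)),
      intervalIntegral.integral_const_mul, intervalIntegral.integral_const_mul]
  have hkey : c * Iψ + (β - ℏ * lam) * I2 + g * I4 = 0 := by
    have : Iψ + ((β - ℏ * lam) * I2 + g * I4) / c = 0 := by
      rw [← hsplit, hFTC, h0, hLv]; ring
    field_simp at this
    linarith
  -- nonnegativity
  have hI2nn : 0 ≤ I2 := intervalIntegral.integral_nonneg hL0 (fun x _ => by positivity)
  have hI4nn : 0 ≤ I4 := intervalIntegral.integral_nonneg hL0 (fun x _ => by positivity)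
  have hIψnn : 0 ≤ Iψ := intervalIntegral.integral_nonneg hL0 (fun x _ => by positivity)
  have hderiv_eq : (∫ x in (0:ℝ)..L, (deriv φ x) ^ 2) = Iψ := by
    apply intervalIntegral.integral_congr_ae
    have hne : ∀ᵐ (x:ℝ), x ≠ L := by simp [ae_iff, measure_singleton]
    filter_upwards [hne] with x hx hmem
    rw [Set.uIoc_of_le hL0] at hmem
    exact by rw [hψeq x ⟨hmem.1, lt_of_le_of_ne hmem.2 hx⟩]
  refine ⟨by nlinarith, ?_, ?_⟩
  · rw [hderiv_eq]; nlinarith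
  · -- Cauchy-Schwarz: I2^2 ≤ L * I4
    have hexp : (∫ x in (0:ℝ)..L, (φ x ^ 2 - I2 / L) ^ 2)
        = I4 - 2 * (I2 / L) * I2 + (I2 / L) ^ 2 * (L - 0) := by
      have heq : ∀ x : ℝ, (φ x ^ 2 - I2 / L) ^ 2
          = φ x ^ 4 - 2 * (I2 / L) * φ x ^ 2 + (I2 / L) ^ 2 := fun x => by ring
      simp_rw [heq]
      rw [intervalIntegral.integral_add (hintφ4.sub (hintφ2.const_mul _))
        intervalIntegrable_const,
        intervalIntegral.integral_sub hintφ4 (hintφ2.const_mul _),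
        intervalIntegral.integral_const_mul, intervalIntegral.integral_const]
      simp only [smul_eq_mul]
      ring
    have hnn : 0 ≤ ∫ x in (0:ℝ)..L, (φ x ^ 2 - I2 / L) ^ 2 :=
      intervalIntegral.integral_nonneg hL0 (fun x _ => sq_nonneg _)
    have hCS : I2 ^ 2 ≤ L * I4 := by
      rw [hexp] at hnn
      have hLne : L ≠ 0 := hL.ne'
      have hid : I4 - 2 * (I2 / L) * I2 + (I2 / L) ^ 2 * (L - 0) = I4 - I2 ^ 2 / L := by
        field_simp; ring
      rw [hid] at hnn
      have h2 : I2 ^ 2 ≤ I4 * L := (div_le_iff₀ hL).1 (by linarith)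
      linarith
    set M : ℝ := max (ℏ * lam - β) 0 with hM
    have hMnn : 0 ≤ M := le_max_right _ _
    have hMge : ℏ * lam - β ≤ M := le_max_left _ _
    have hgA : g * I4 ≤ M * I2 := by nlinarith
    clear_value I2 I4 Iψ
    rcases eq_or_lt_of_le hI4nn with h | h
    · rw [← h]; positivity
    · have h1 : 0 ≤ g * I4 := by positivity
      have h2 : 0 ≤ M * I2 := mul_nonneg hMnn hI2nn
      have hsq : (g * I4) * (g * I4) ≤ (M * I2) * (M * I2) := mul_le_mul hgA hgA h1 h2
      have hsq2 : M ^ 2 * I2 ^ 2 ≤ M ^ 2 * (L * I4) :=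
        mul_le_mul_of_nonneg_left hCS (sq_nonneg M)
      have h3 : (g * I4) * (g * I4) ≤ M ^ 2 * (L * I4) := by
        calc (g * I4) * (g * I4) ≤ (M * I2) * (M * I2) := hsq
          _ = M ^ 2 * I2 ^ 2 := by ring
          _ ≤ M ^ 2 * (L * I4) := hsq2
      rw [le_div_iff₀ (by positivity : (0:ℝ) < g ^ 2)]
      have h4 : (I4 * g ^ 2) * I4 ≤ (L * M ^ 2) * I4 := by
        have e1 : (I4 * g ^ 2) * I4 = (g * I4) * (g * I4) := by ring
        have e2 : (L * M ^ 2) * I4 = M ^ 2 * (L * I4) := by ring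
        rw [e1, e2]; exact h3
      exact le_of_mul_le_mul_right h4 h
end
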